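/- arXiv:2007.14786 — 9 statements merged into one kernel-verified Lean document; each statement's English description precedes it below -/
import Mathlib

section
/- The function y(x) = ν(1+x)∫₀^{x/(1+x)} ((1−v)/v)^κ e^{κ/v} ∫₀^v u^{κ−1}/(1−u)^{κ+2} e^{−κ/u} du dv solves the second-order ordinary differential equation x² y''(x) + κ(1+x) y'(x) − κ y(x) = ν x for all x ∈ (0,∞). -/
open Real Set intervalIntegral

section S0aux
open Filter Topology MeasureTheory

namespace S0

noncomputable def g (κ u : ℝ) : ℝ := u ^ (κ-1) * (1-u) ^ (-(κ+2)) * Real.exp (-κ/u)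
noncomputable def g0 (κ u : ℝ) : ℝ := if u ≤ 0 then 0 else g κ u
noncomputable def G (κ v : ℝ) : ℝ := ∫ u in (0:ℝ)..v, g0 κ u
noncomputable def f (κ v : ℝ) : ℝ := (1-v) ^ κ * v ^ (-κ) * Real.exp (κ/v)
noncomputable def h (κ u : ℝ) : ℝ := u ^ (κ+1) * (1-u) ^ (-(κ+2)) * Real.exp (-κ/u)
noncomputable def F (κ t : ℝ) : ℝ := ∫ v in (0:ℝ)..t, f κ v * G κ v

variable {κ : ℝ}

/-- u^s e^{-κ/u} → 0 as u → 0⁺ -/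
lemma psi_tendsto (hκ : 0 < κ) (s : ℝ) : Tendsto (fun u : ℝ => u ^ s * Real.exp (-κ/u)) (𝓝[>] 0) (𝓝 0) := by
  have h1 : Tendsto (fun x : ℝ => x ^ (-s) * Real.exp (-κ * x)) atTop (𝓝 0) :=
    tendsto_rpow_mul_exp_neg_mul_atTop_nhds_zero (-s) κ hκ
  have h2 : Tendsto (fun u : ℝ => u⁻¹) (𝓝[>] (0:ℝ)) atTop := tendsto_inv_nhdsGT_zero
  have h3 := h1.comp h2
  refine h3.congr' ?_
  filter_upwards [self_mem_nhdsWithin] with u (hu : 0 < u)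
  simp only [Function.comp]
  rw [Real.rpow_neg (by positivity), Real.inv_rpow hu.le, inv_inv]
  ring_nf

lemma g_cont : ContinuousOn (g κ) (Ioo 0 1) := by
  intro u hu
  have h1 : ContinuousAt (g κ) u := by
    have := hu.1; have := hu.2
    unfold g
    have c1 : ContinuousAt (fun u : ℝ => u ^ (κ-1)) u :=
      (Real.continuousAt_rpow_const u _ (Or.inl (ne_of_gt hu.1)))
    have c2 : ContinuousAt (fun u : ℝ => (1-u) ^ (-(κ+2))) u :=
      (Real.continuousAt_rpow_const _ _ (Or.inl (by simp; linarith))).comp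
        (continuousAt_const.sub continuousAt_id)
    have c3 : ContinuousAt (fun u : ℝ => Real.exp (-κ/u)) u :=
      Real.continuous_exp.continuousAt.comp (continuousAt_const.div continuousAt_id (ne_of_gt hu.1))
    exact (c1.mul c2).mul c3
  exact h1.continuousWithinAt

lemma g_nonneg {u : ℝ} (hu : 0 ≤ u) (hu1 : u ≤ 1) : 0 ≤ g κ u := by
  unfold g
  have : (0:ℝ) ≤ 1 - u := by linarith
  positivity

lemma g0_nonneg {u : ℝ} (hu1 : u ≤ 1) : 0 ≤ g0 κ u := by
  unfold g0; split
  · exact le_rfl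
  · exact g_nonneg (le_of_not_ge (by assumption)) hu1

lemma g0_eq_g {u : ℝ} (hu : 0 < u) : g0 κ u = g κ u := by
  unfold g0; rw [if_neg (not_le.mpr hu)]

lemma g0_tendsto_zero (hκ : 0 < κ) : Tendsto (g0 κ) (𝓝[>] 0) (𝓝 0) := by
  have h1 : Tendsto (fun u : ℝ => (u ^ (κ-1) * Real.exp (-κ/u)) * (1-u) ^ (-(κ+2)))
      (𝓝[>] 0) (𝓝 (0 * (1-(0:ℝ)) ^ (-(κ+2)))) := by
    apply Tendsto.mul (psi_tendsto hκ (κ-1))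
    have : ContinuousAt (fun u : ℝ => (1-u) ^ (-(κ+2))) 0 :=
      (Real.continuousAt_rpow_const _ _ (Or.inl (by norm_num))).comp
        (continuousAt_const.sub continuousAt_id)
    exact this.continuousWithinAt
  rw [zero_mul] at h1
  refine h1.congr' ?_
  filter_upwards [self_mem_nhdsWithin] with u (hu : 0 < u)
  rw [g0_eq_g hu]; unfold g; ring

lemma g0_continuousOn (hκ : 0 < κ) : ContinuousOn (g0 κ) (Ico 0 1) := by
  intro u hu
  rcases eq_or_lt_of_le hu.1 with h0 | h0
  · -- u = 0
    subst h0
    unfold ContinuousWithinAt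
    have hg00 : g0 κ 0 = 0 := by unfold g0; simp
    rw [hg00]
    have hsub : 𝓝[Ico (0:ℝ) 1] 0 ≤ 𝓝[Ici 0] 0 := nhdsWithin_mono _ Ico_subset_Ici_self
    refine Tendsto.mono_left ?_ hsub
    have : Ici (0:ℝ) = Ioi 0 ∪ {0} := by
      ext z; simp [le_iff_lt_or_eq, eq_comm, or_comm]
    rw [this, nhdsWithin_union]
    refine Tendsto.sup (g0_tendsto_zero hκ) ?_
    rw [nhdsWithin_singleton]
    rw [Filter.tendsto_pure_left]
    intro s hs
    simpa [hg00] using mem_of_mem_nhds hs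
  · -- u > 0
    have hco : ContinuousAt (g κ) u := by
      have := (g_cont (κ := κ)) u ⟨h0, hu.2⟩
      exact (g_cont (κ := κ)).continuousAt (Ioo_mem_nhds h0 hu.2) |>.congr (by
        filter_upwards with z; rfl)
    have heq : g0 κ =ᶠ[𝓝 u] g κ := by
      filter_upwards [Ioi_mem_nhds h0] with z (hz : 0 < z)
      exact g0_eq_g hz
    exact (hco.congr heq.symm).continuousWithinAt

lemma g0_intervalIntegrable (hκ : 0 < κ) {b : ℝ} (hb0 : 0 ≤ b) (hb : b < 1) :
    IntervalIntegrable (g0 κ) volume 0 b := by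
  apply ContinuousOn.intervalIntegrable
  have : uIcc (0:ℝ) b = Icc 0 b := uIcc_of_le hb0
  rw [this]
  exact (g0_continuousOn hκ).mono (fun z hz => ⟨hz.1, lt_of_le_of_lt hz.2 hb⟩)

lemma G_hasDerivAt (hκ : 0 < κ) {v : ℝ} (hv : v ∈ Ioo (0:ℝ) 1) :
    HasDerivAt (G κ) (g κ v) v := by
  have h1 : HasDerivAt (G κ) (g0 κ v) v := by
    apply intervalIntegral.integral_hasDerivAt_right
      (g0_intervalIntegrable hκ hv.1.le hv.2)
    · exact ((g0_continuousOn hκ).mono (fun z hz => ⟨hz.1.le, hz.2⟩)).stronglyMeasurableAtFilter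
        isOpen_Ioo v hv
    · have heq : g0 κ =ᶠ[𝓝 v] g κ := by
        filter_upwards [Ioi_mem_nhds hv.1] with z (hz : 0 < z)
        exact g0_eq_g hz
      exact ((g_cont.continuousAt (Ioo_mem_nhds hv.1 hv.2))).congr heq.symm
  rwa [g0_eq_g hv.1] at h1

lemma G_continuousOn (hκ : 0 < κ) {b : ℝ} (hb0 : 0 ≤ b) (hb : b < 1) :
    ContinuousOn (G κ) (Icc 0 b) := by
  have := intervalIntegral.continuousOn_primitive_interval
    (f := g0 κ) (μ := volume) (a := 0) (b := b) ?_
  · rwa [uIcc_of_le hb0] at this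
  · rw [uIcc_of_le hb0]
    exact ((g0_continuousOn hκ).mono
      (fun z hz => ⟨hz.1, lt_of_le_of_lt hz.2 hb⟩)).integrableOn_compact isCompact_Icc

lemma G_nonneg {v : ℝ} (hv0 : 0 ≤ v) (hv1 : v ≤ 1) : 0 ≤ G κ v := by
  apply intervalIntegral.integral_nonneg hv0
  intro u hu
  exact g0_nonneg (le_trans hu.2 hv1)

noncomputable def D (κ u : ℝ) : ℝ :=
  ((κ+1) * u ^ κ * (1-u) ^ (-(κ+2)) * Real.exp (-κ/u)
  + (κ+2) * u ^ (κ+1) * (1-u) ^ (-(κ+3)) * Real.exp (-κ/u))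
  + κ * g κ u

lemma h_hasDerivAt (hκ : 0 < κ) {u : ℝ} (hu : u ∈ Ioo (0:ℝ) 1) :
    HasDerivAt (h κ) (D κ u) u := by
  obtain ⟨hu0, hu1⟩ := hu
  have hune : u ≠ 0 := ne_of_gt hu0
  have h1u : (0:ℝ) < 1 - u := by linarith
  have hA : HasDerivAt (fun x : ℝ => x ^ (κ+1)) ((κ+1) * u ^ κ) u := by
    have h1 := Real.hasDerivAt_rpow_const (x := u) (p := κ+1) (Or.inl hune)
    have e : κ + 1 - 1 = κ := by ring
    rwa [e] at h1
  have hB : HasDerivAt (fun x : ℝ => (1-x) ^ (-(κ+2))) ((κ+2) * (1-u) ^ (-(κ+3))) u := by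
    have hin : HasDerivAt (fun x : ℝ => 1 - x) (-1) u := by
      simpa using (hasDerivAt_id u).const_sub (1:ℝ)
    have hout := Real.hasDerivAt_rpow_const (x := 1-u) (p := -(κ+2)) (Or.inl (ne_of_gt h1u))
    have h2 := hout.comp u hin
    have e : -(κ+2) - 1 = -(κ+3) := by ring
    rw [e] at h2
    refine h2.congr_deriv (Eq.symm ?_)
    simp [Function.comp]
    ring
  have hC : HasDerivAt (fun x : ℝ => Real.exp (-κ/x)) (Real.exp (-κ/u) * (κ / u^2)) u := by
    have hin : HasDerivAt (fun x : ℝ => -κ/x) (κ / u^2) u := by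
      have h2 := (hasDerivAt_inv hune).const_mul (-κ)
      have e1 : (fun x : ℝ => -κ * x⁻¹) = fun x : ℝ => -κ/x := by funext x; ring
      rw [e1] at h2
      refine h2.congr_deriv (Eq.symm ?_)
      field_simp
    exact (Real.hasDerivAt_exp _).comp u hin
  have hprod := (hA.mul hB).mul hC
  have heq : h κ = fun x : ℝ => (x ^ (κ+1) * (1-x) ^ (-(κ+2))) * Real.exp (-κ/x) := by
    funext x; unfold h; ring
  rw [heq]
  refine hprod.congr_deriv (Eq.symm ?_)
  simp only [Pi.mul_apply, Pi.div_apply, Pi.add_apply, id_eq]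
  have key : u ^ (κ+1) * (κ / u^2) = κ * u ^ (κ-1) := by
    have h3 : u ^ (κ+1) = u ^ (κ-1) * u ^ 2 := by
      rw [← Real.rpow_two, ← Real.rpow_add hu0]; ring_nf
    rw [h3]
    field_simp
  unfold D g
  linear_combination (-((1-u) ^ (-(κ+2)) * Real.exp (-κ/u))) * key

lemma kg_le_D (hκ : 0 < κ) {u : ℝ} (hu : u ∈ Ioo (0:ℝ) 1) : κ * g κ u ≤ D κ u := by
  obtain ⟨hu0, hu1⟩ := hu
  have h1u : (0:ℝ) ≤ 1 - u := by linarith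
  have t1 : 0 ≤ (κ+1) * u ^ κ * (1-u) ^ (-(κ+2)) * Real.exp (-κ/u) := by positivity
  have t2 : 0 ≤ (κ+2) * u ^ (κ+1) * (1-u) ^ (-(κ+3)) * Real.exp (-κ/u) := by positivity
  unfold D
  linarith

lemma h_tendsto_zero (hκ : 0 < κ) : Tendsto (h κ) (𝓝[>] 0) (𝓝 0) := by
  have h1 : Tendsto (fun u : ℝ => (u ^ (κ+1) * Real.exp (-κ/u)) * (1-u) ^ (-(κ+2)))
      (𝓝[>] 0) (𝓝 (0 * (1-(0:ℝ)) ^ (-(κ+2)))) := by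
    apply Tendsto.mul (psi_tendsto hκ (κ+1))
    have : ContinuousAt (fun u : ℝ => (1-u) ^ (-(κ+2))) 0 :=
      (Real.continuousAt_rpow_const _ _ (Or.inl (by norm_num))).comp
        (continuousAt_const.sub continuousAt_id)
    exact this.continuousWithinAt
  rw [zero_mul] at h1
  refine h1.congr' ?_
  filter_upwards [self_mem_nhdsWithin] with u (hu : 0 < u)
  unfold h; ring

lemma D_continuousOn (hκ : 0 < κ) : ContinuousOn (D κ) (Ioo 0 1) := by
  unfold D
  apply ContinuousOn.add
  apply ContinuousOn.add
  · intro u hu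
    have c1 : ContinuousAt (fun u : ℝ => (κ+1) * u ^ κ * (1-u) ^ (-(κ+2)) * Real.exp (-κ/u)) u := by
      have e1 : ContinuousAt (fun u : ℝ => u ^ κ) u :=
        Real.continuousAt_rpow_const u _ (Or.inl (ne_of_gt hu.1))
      have e2 : ContinuousAt (fun u : ℝ => (1-u) ^ (-(κ+2))) u :=
        (Real.continuousAt_rpow_const _ _ (Or.inl (by simp; linarith [hu.2]))).comp
          (continuousAt_const.sub continuousAt_id)
      have e3 : ContinuousAt (fun u : ℝ => Real.exp (-κ/u)) u :=
        Real.continuous_exp.continuousAt.comp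
          (continuousAt_const.div continuousAt_id (ne_of_gt hu.1))
      exact (((continuousAt_const.mul e1).mul e2).mul e3)
    exact c1.continuousWithinAt
  · intro u hu
    have c1 : ContinuousAt (fun u : ℝ => (κ+2) * u ^ (κ+1) * (1-u) ^ (-(κ+3)) * Real.exp (-κ/u)) u := by
      have e1 : ContinuousAt (fun u : ℝ => u ^ (κ+1)) u :=
        Real.continuousAt_rpow_const u _ (Or.inl (ne_of_gt hu.1))
      have e2 : ContinuousAt (fun u : ℝ => (1-u) ^ (-(κ+3))) u :=
        (Real.continuousAt_rpow_const _ _ (Or.inl (by simp; linarith [hu.2]))).comp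
          (continuousAt_const.sub continuousAt_id)
      have e3 : ContinuousAt (fun u : ℝ => Real.exp (-κ/u)) u :=
        Real.continuous_exp.continuousAt.comp
          (continuousAt_const.div continuousAt_id (ne_of_gt hu.1))
      exact (((continuousAt_const.mul e1).mul e2).mul e3)
    exact c1.continuousWithinAt
  · exact continuousOn_const.mul g_cont

lemma kG_le_h (hκ : 0 < κ) {v : ℝ} (hv : v ∈ Ioo (0:ℝ) 1) : κ * G κ v ≤ h κ v := by
  obtain ⟨hv0, hv1⟩ := hv
  -- Step: for ε ∈ (0, v], κ * (G v - G ε) ≤ h v - h ε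
  have step : ∀ ε ∈ Ioc (0:ℝ) v, κ * G κ v ≤ h κ v - h κ ε + κ * G κ ε := by
    intro ε hε
    obtain ⟨hε0, hεv⟩ := hε
    have hIcc : Icc ε v ⊆ Ioo 0 1 := fun z hz => ⟨lt_of_lt_of_le hε0 hz.1, lt_of_le_of_lt hz.2 hv1⟩
    have hDint : IntervalIntegrable (D κ) volume ε v := by
      apply ContinuousOn.intervalIntegrable
      rw [uIcc_of_le hεv]
      exact (D_continuousOn hκ).mono hIcc
    have hftc : ∫ u in ε..v, D κ u = h κ v - h κ ε := by
      apply intervalIntegral.integral_eq_sub_of_hasDerivAt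
      · intro u hu
        rw [uIcc_of_le hεv] at hu
        exact h_hasDerivAt hκ (hIcc hu)
      · exact hDint
    have hg0int : IntervalIntegrable (fun u => κ * g0 κ u) volume ε v := by
      apply IntervalIntegrable.const_mul
      apply (g0_intervalIntegrable hκ hv0.le hv1).mono_set
      rw [uIcc_of_le hεv, uIcc_of_le hv0.le]
      exact Icc_subset_Icc hε0.le le_rfl
    have hmono : ∫ u in ε..v, κ * g0 κ u ≤ ∫ u in ε..v, D κ u := by
      apply intervalIntegral.integral_mono_on hεv hg0int hDint
      intro u hu
      have huIoo : u ∈ Ioo (0:ℝ) 1 := hIcc hu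
      rw [g0_eq_g huIoo.1]
      exact kg_le_D hκ huIoo
    have hsplit : ∫ u in ε..v, κ * g0 κ u = κ * (G κ v - G κ ε) := by
      rw [intervalIntegral.integral_const_mul]
      congr 1
      unfold G
      rw [← intervalIntegral.integral_interval_sub_left
        (g0_intervalIntegrable hκ hv0.le hv1)
        ((g0_intervalIntegrable hκ hv0.le hv1).mono_set (by
          rw [uIcc_of_le hε0.le, uIcc_of_le hv0.le]
          exact Icc_subset_Icc le_rfl hεv))]
    rw [hsplit, hftc] at hmono
    linarith
  -- take the limit ε → 0⁺
  have hlim : Tendsto (fun ε => h κ v - h κ ε + κ * G κ ε) (𝓝[>] (0:ℝ))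
      (𝓝 (h κ v - 0 + κ * 0)) := by
    refine Tendsto.add (Tendsto.sub tendsto_const_nhds (h_tendsto_zero hκ)) ?_
    refine Tendsto.const_mul κ ?_
    have hc := (G_continuousOn hκ hv0.le hv1) 0 ⟨le_rfl, hv0.le⟩
    have hG0 : G κ 0 = 0 := by unfold G; simp
    unfold ContinuousWithinAt at hc
    rw [hG0] at hc
    refine hc.mono_left ?_
    rw [← nhdsWithin_Ioc_eq_nhdsGT hv0]
    exact nhdsWithin_mono _ Ioc_subset_Icc_self
  have hev : ∀ᶠ ε in 𝓝[>] (0:ℝ), κ * G κ v ≤ h κ v - h κ ε + κ * G κ ε := by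
    filter_upwards [Ioc_mem_nhdsGT_of_mem ⟨le_rfl, hv0⟩] with ε hε
    exact step ε hε
  have := ge_of_tendsto hlim hev
  simpa using this

lemma f_nonneg {v : ℝ} (hv0 : 0 ≤ v) (hv1 : v ≤ 1) : 0 ≤ f κ v := by
  unfold f
  have : (0:ℝ) ≤ 1 - v := by linarith
  positivity

lemma f_continuousOn : ContinuousOn (f κ) (Ioo 0 1) := by
  intro v hv
  have c1 : ContinuousAt (fun v : ℝ => (1-v) ^ κ) v :=
    (Real.continuousAt_rpow_const _ _ (Or.inl (by simp; linarith [hv.2]))).comp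
      (continuousAt_const.sub continuousAt_id)
  have c2 : ContinuousAt (fun v : ℝ => v ^ (-κ)) v :=
    Real.continuousAt_rpow_const v _ (Or.inl (ne_of_gt hv.1))
  have c3 : ContinuousAt (fun v : ℝ => Real.exp (κ/v)) v :=
    Real.continuous_exp.continuousAt.comp
      (continuousAt_const.div continuousAt_id (ne_of_gt hv.1))
  exact (((c1.mul c2).mul c3)).continuousWithinAt

lemma f_hasDerivAt (hκ : 0 < κ) {v : ℝ} (hv : v ∈ Ioo (0:ℝ) 1) :
    HasDerivAt (f κ) (-κ * f κ v * (v^2 * (1-v))⁻¹) v := by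
  obtain ⟨hv0, hv1⟩ := hv
  have hvne : v ≠ 0 := ne_of_gt hv0
  have h1v : (0:ℝ) < 1 - v := by linarith
  have hA : HasDerivAt (fun x : ℝ => (1-x) ^ κ) (-(κ * (1-v) ^ (κ-1))) v := by
    have hin : HasDerivAt (fun x : ℝ => 1 - x) (-1) v := by
      simpa using (hasDerivAt_id v).const_sub (1:ℝ)
    have hout := Real.hasDerivAt_rpow_const (x := 1-v) (p := κ) (Or.inl (ne_of_gt h1v))
    have h2 := hout.comp v hin
    refine h2.congr_deriv (Eq.symm ?_)
    ring
  have hB : HasDerivAt (fun x : ℝ => x ^ (-κ)) ((-κ) * v ^ (-κ-1)) v :=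
    Real.hasDerivAt_rpow_const (x := v) (p := -κ) (Or.inl hvne)
  have hC : HasDerivAt (fun x : ℝ => Real.exp (κ/x)) (Real.exp (κ/v) * (-κ / v^2)) v := by
    have hin : HasDerivAt (fun x : ℝ => κ/x) (-κ / v^2) v := by
      have h2 := (hasDerivAt_inv hvne).const_mul κ
      have e1 : (fun x : ℝ => κ * x⁻¹) = fun x : ℝ => κ/x := by funext x; ring
      rw [e1] at h2
      refine h2.congr_deriv (Eq.symm ?_)
      field_simp
    exact (Real.hasDerivAt_exp _).comp v hin
  have hprod := (hA.mul hB).mul hC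
  have heq : f κ = fun x : ℝ => ((1-x) ^ κ * x ^ (-κ)) * Real.exp (κ/x) := by
    funext x; unfold f; ring
  rw [heq]
  refine hprod.congr_deriv (Eq.symm ?_)
  have e1 : (1-v) ^ (κ-1) = (1-v) ^ κ * (1-v)⁻¹ := by
    rw [show κ-1 = κ + (-1) by ring, Real.rpow_add h1v, Real.rpow_neg_one]
  have e2 : v ^ (-κ-1) = v ^ (-κ) * v⁻¹ := by
    rw [show -κ-1 = -κ + (-1) by ring, Real.rpow_add hv0, Real.rpow_neg_one]
  rw [e1, e2]
  simp only [Pi.mul_apply]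
  field_simp
  ring

lemma fh_eq (hκ : 0 < κ) {v : ℝ} (hv : v ∈ Ioo (0:ℝ) 1) :
    f κ v * h κ v = v * ((1-v)^2)⁻¹ := by
  obtain ⟨hv0, hv1⟩ := hv
  have h1v : (0:ℝ) < 1 - v := by linarith
  unfold f h
  have e1 : (1-v) ^ κ * (1-v) ^ (-(κ+2)) = ((1-v)^2)⁻¹ := by
    rw [← Real.rpow_add h1v, show κ + -(κ+2) = -2 by ring]
    rw [show (-2 : ℝ) = -(2:ℕ) by norm_num, Real.rpow_neg h1v.le, Real.rpow_natCast]
  have e2 : v ^ (-κ) * v ^ (κ+1) = v := by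
    rw [← Real.rpow_add hv0, show -κ + (κ+1) = 1 by ring, Real.rpow_one]
  have e3 : Real.exp (κ/v) * Real.exp (-κ/v) = 1 := by
    rw [← Real.exp_add]
    simp [neg_div]
  calc (1-v) ^ κ * v ^ (-κ) * Real.exp (κ/v) * (v ^ (κ+1) * (1-v) ^ (-(κ+2)) * Real.exp (-κ/v))
      = ((1-v) ^ κ * (1-v) ^ (-(κ+2))) * (v ^ (-κ) * v ^ (κ+1)) * (Real.exp (κ/v) * Real.exp (-κ/v)) := by ring
    _ = v * ((1-v)^2)⁻¹ := by rw [e1, e2, e3]; ring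

lemma fg_eq (hκ : 0 < κ) {v : ℝ} (hv : v ∈ Ioo (0:ℝ) 1) :
    f κ v * g κ v = v⁻¹ * ((1-v)^2)⁻¹ := by
  obtain ⟨hv0, hv1⟩ := hv
  have h1v : (0:ℝ) < 1 - v := by linarith
  unfold f g
  have e1 : (1-v) ^ κ * (1-v) ^ (-(κ+2)) = ((1-v)^2)⁻¹ := by
    rw [← Real.rpow_add h1v, show κ + -(κ+2) = -2 by ring]
    rw [show (-2 : ℝ) = -(2:ℕ) by norm_num, Real.rpow_neg h1v.le, Real.rpow_natCast]
  have e2 : v ^ (-κ) * v ^ (κ-1) = v⁻¹ := by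
    rw [← Real.rpow_add hv0, show -κ + (κ-1) = -1 by ring, Real.rpow_neg_one]
  have e3 : Real.exp (κ/v) * Real.exp (-κ/v) = 1 := by
    rw [← Real.exp_add]
    simp [neg_div]
  calc (1-v) ^ κ * v ^ (-κ) * Real.exp (κ/v) * (v ^ (κ-1) * (1-v) ^ (-(κ+2)) * Real.exp (-κ/v))
      = ((1-v) ^ κ * (1-v) ^ (-(κ+2))) * (v ^ (-κ) * v ^ (κ-1)) * (Real.exp (κ/v) * Real.exp (-κ/v)) := by ring
    _ = v⁻¹ * ((1-v)^2)⁻¹ := by rw [e1, e2, e3]; ring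

lemma fG_le (hκ : 0 < κ) {v t : ℝ} (hv : v ∈ Ioc (0:ℝ) t) (ht : t < 1) :
    f κ v * G κ v ≤ t * ((1-t)^2)⁻¹ / κ := by
  obtain ⟨hv0, hvt⟩ := hv
  have hv1 : v < 1 := lt_of_le_of_lt hvt ht
  have hmem : v ∈ Ioo (0:ℝ) 1 := ⟨hv0, hv1⟩
  have h1v : (0:ℝ) < 1 - v := by linarith
  have h1t : (0:ℝ) < 1 - t := by linarith
  have hf : 0 ≤ f κ v := f_nonneg hv0.le hv1.le
  have step1 : f κ v * G κ v ≤ f κ v * (h κ v / κ) := by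
    apply mul_le_mul_of_nonneg_left _ hf
    rw [le_div_iff₀ hκ]
    linarith [kG_le_h hκ hmem]
  have step2 : f κ v * (h κ v / κ) = v * ((1-v)^2)⁻¹ / κ := by
    rw [mul_div_assoc', fh_eq hκ hmem]
  have step3 : v * ((1-v)^2)⁻¹ ≤ t * ((1-t)^2)⁻¹ := by
    rw [← div_eq_mul_inv, ← div_eq_mul_inv,
      div_le_div_iff₀ (by positivity) (by positivity)]
    have q1 : v * (1-t)^2 ≤ t * (1-t)^2 :=
      mul_le_mul_of_nonneg_right hvt (sq_nonneg _)
    have q2 : (1-t)^2 ≤ (1-v)^2 := by nlinarith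
    have q3 : t * (1-t)^2 ≤ t * (1-v)^2 :=
      mul_le_mul_of_nonneg_left q2 (by linarith)
    linarith
  calc f κ v * G κ v ≤ f κ v * (h κ v / κ) := step1
    _ = v * ((1-v)^2)⁻¹ / κ := step2
    _ ≤ t * ((1-t)^2)⁻¹ / κ := by gcongr

lemma G_continuousAt (hκ : 0 < κ) {v : ℝ} (hv : v ∈ Ioo (0:ℝ) 1) :
    ContinuousAt (G κ) v := (G_hasDerivAt hκ hv).continuousAt

lemma fG_continuousOn (hκ : 0 < κ) :
    ContinuousOn (fun v => f κ v * G κ v) (Ioo 0 1) := by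
  apply ContinuousOn.mul f_continuousOn
  intro v hv
  exact (G_continuousAt hκ hv).continuousWithinAt

lemma fG_intervalIntegrable (hκ : 0 < κ) {t : ℝ} (ht0 : 0 ≤ t) (ht : t < 1) :
    IntervalIntegrable (fun v => f κ v * G κ v) volume 0 t := by
  rw [intervalIntegrable_iff_integrableOn_Ioc_of_le ht0]
  have hmeas : AEStronglyMeasurable (fun v => f κ v * G κ v) (volume.restrict (Ioc 0 t)) := by
    apply ContinuousOn.aestronglyMeasurable _ measurableSet_Ioc
    exact (fG_continuousOn hκ).mono (fun z hz => ⟨hz.1, lt_of_le_of_lt hz.2 ht⟩)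
  apply Integrable.mono' (integrable_const (t * ((1-t)^2)⁻¹ / κ)) hmeas
  rw [ae_restrict_iff' measurableSet_Ioc]
  filter_upwards with v hv
  rw [Real.norm_eq_abs, abs_of_nonneg]
  · exact fG_le hκ hv ht
  · have hv1 : v ≤ 1 := le_of_lt (lt_of_le_of_lt hv.2 ht)
    exact mul_nonneg (f_nonneg hv.1.le hv1) (G_nonneg hv.1.le hv1)

lemma F_hasDerivAt (hκ : 0 < κ) {t : ℝ} (ht : t ∈ Ioo (0:ℝ) 1) :
    HasDerivAt (F κ) (f κ t * G κ t) t := by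
  apply intervalIntegral.integral_hasDerivAt_right
    (fG_intervalIntegrable hκ ht.1.le ht.2)
  · exact (fG_continuousOn hκ).stronglyMeasurableAtFilter isOpen_Ioo t ht
  · exact ((fG_continuousOn hκ).continuousAt (Ioo_mem_nhds ht.1 ht.2))

lemma inner_eq (hκ : 0 < κ) {v : ℝ} (hv0 : 0 ≤ v) :
    (∫ u in (0:ℝ)..v, u ^ (κ-1) * (1-u) ^ (-(κ+2)) * Real.exp (-κ/u)) = G κ v := by
  unfold G
  apply intervalIntegral.integral_congr_ae
  filter_upwards with u hu
  rw [uIoc_of_le hv0] at hu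
  exact (g0_eq_g hu.1).symm

lemma outer_eq (hκ : 0 < κ) {t : ℝ} (ht0 : 0 ≤ t) (ht1 : t < 1) :
    (∫ v in (0:ℝ)..t, ((1-v)/v) ^ κ * Real.exp (κ/v) *
      ∫ u in (0:ℝ)..v, u ^ (κ-1) * (1-u) ^ (-(κ+2)) * Real.exp (-κ/u)) = F κ t := by
  unfold F
  apply intervalIntegral.integral_congr
  intro v hv
  rw [uIcc_of_le ht0] at hv
  beta_reduce
  rw [inner_eq hκ hv.1]
  congr 1
  unfold f
  rcases eq_or_lt_of_le hv.1 with h0 | h0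
  · subst h0
    rw [div_zero, Real.zero_rpow (ne_of_gt hκ)]
    rw [Real.zero_rpow (by simpa using (ne_of_gt hκ))]
    ring
  · have h1v : (0:ℝ) ≤ 1 - v := by
      have := lt_of_le_of_lt hv.2 ht1; linarith
    rw [Real.div_rpow h1v h0.le, Real.rpow_neg h0.le, div_eq_mul_inv]

lemma f_pos {κ v : ℝ} (hv : v ∈ Ioo (0:ℝ) 1) : 0 < f κ v := by
  obtain ⟨h0, h1⟩ := hv
  have : (0:ℝ) < 1 - v := by linarith
  unfold f
  positivity

lemma val_id (ν κ x fv gv Gv t : ℝ) (ht : t ≠ 0) (h1t : (1:ℝ)-t ≠ 0)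
    (hx : (1:ℝ)+x ≠ 0) (hfv : fv ≠ 0)
    (hfg : fv * gv = t⁻¹ * ((1-t)^2)⁻¹) :
    ν * (((1+x)^3)⁻¹ * (-κ * (fv * Gv) * (t^2*(1-t))⁻¹ + t⁻¹ * ((1-t)^2)⁻¹)) =
    ν * (fv * Gv * ((1+x)^2)⁻¹) +
      (ν * (-κ * fv * (t^2*(1-t))⁻¹ * ((1+x)^2)⁻¹ * Gv + fv * (gv * ((1+x)^2)⁻¹)) * (1+x)⁻¹ +
        ν * (fv * Gv) * -((1+x)^2)⁻¹) := by
  have hgv : gv = (fv * (t * (1-t)^2))⁻¹ := by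
    have h2 : fv * gv * (t * (1-t)^2) = 1 := by
      rw [hfg]; field_simp
    field_simp at h2 ⊢
    linarith
  subst hgv
  field_simp
  ring

theorem main (κ ν : ℝ) (hκ : 0 < κ) (hν : 0 < ν)
    (y : ℝ → ℝ)
    (hy : ∀ x : ℝ, y x =
      ν * (1 + x) * ∫ v in (0:ℝ)..(x / (1 + x)),
        ((1 - v) / v) ^ κ * Real.exp (κ / v) *
          ∫ u in (0:ℝ)..v, u ^ (κ - 1) * (1 - u) ^ (-(κ + 2)) * Real.exp (-κ / u)) :
    ∀ x ∈ Set.Ioi (0:ℝ),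
      x ^ 2 * deriv (deriv y) x + κ * (1 + x) * deriv y x - κ * y x = ν * x := by
  -- basic facts about τ x = x/(1+x)
  have hτmem : ∀ x : ℝ, 0 < x → x/(1+x) ∈ Ioo (0:ℝ) 1 := by
    intro x hx
    have h1x : (0:ℝ) < 1 + x := by linarith
    constructor
    · positivity
    · rw [div_lt_one h1x]; linarith
  have hyform : ∀ x ∈ Ioi (0:ℝ), y x = ν * (1+x) * F κ (x/(1+x)) := by
    intro x hx
    rw [hy x]
    congr 1
    have hm := hτmem x hx
    exact outer_eq hκ hm.1.le hm.2
  -- first derivative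
  set y1 : ℝ → ℝ := fun x => ν * F κ (x/(1+x)) +
    ν * (f κ (x/(1+x)) * G κ (x/(1+x))) * (1+x)⁻¹ with hy1def
  have hτd : ∀ x : ℝ, 0 < x → HasDerivAt (fun x : ℝ => x/(1+x)) (((1+x)^2)⁻¹) x := by
    intro x hx
    have h1x : (1:ℝ) + x ≠ 0 := by positivity
    have := (hasDerivAt_id x).div ((hasDerivAt_const x (1:ℝ)).add (hasDerivAt_id x)) h1x
    refine this.congr_deriv (Eq.symm ?_)
    simp only [Pi.mul_apply, Pi.div_apply, Pi.add_apply, id_eq]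
    field_simp
    ring
  have hYd : ∀ x ∈ Ioi (0:ℝ), HasDerivAt (fun x => ν * (1+x) * F κ (x/(1+x))) (y1 x) x := by
    intro x hx
    have hx : (0:ℝ) < x := hx
    have h1x : (0:ℝ) < 1 + x := by linarith
    have hm := hτmem x hx
    have hFc : HasDerivAt (fun x : ℝ => F κ (x/(1+x)))
        ((f κ (x/(1+x)) * G κ (x/(1+x))) * ((1+x)^2)⁻¹) x :=
      by have := (F_hasDerivAt hκ hm).comp x (hτd x hx); exact this
    have hlin : HasDerivAt (fun x : ℝ => ν * (1+x)) ν x := by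
      have := ((hasDerivAt_const x (1:ℝ)).add (hasDerivAt_id x)).const_mul ν
      simpa using this
    have := hlin.mul hFc
    refine this.congr_deriv (Eq.symm ?_)
    rw [hy1def]
    field_simp
  have hyd : ∀ x ∈ Ioi (0:ℝ), HasDerivAt y (y1 x) x := by
    intro x hx
    apply (hYd x hx).congr_of_eventuallyEq
    filter_upwards [isOpen_Ioi.mem_nhds hx] with z hz
    exact hyform z hz
  have hderiv_eq : ∀ x ∈ Ioi (0:ℝ), deriv y x = y1 x := fun x hx => (hyd x hx).deriv
  -- second derivative
  intro x hx
  have hx : (0:ℝ) < x := hx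
  have h1x : (0:ℝ) < 1 + x := by linarith
  have hm := hτmem x hx
  set t : ℝ := x/(1+x) with htdef
  have ht0 : 0 < t := hm.1
  have ht1 : t < 1 := hm.2
  have h1t : (0:ℝ) < 1 - t := by linarith
  have hxne : x ≠ 0 := ne_of_gt hx
  have h1xne : (1:ℝ) + x ≠ 0 := ne_of_gt h1x
  have htne : t ≠ 0 := ne_of_gt ht0
  have h1tne : (1:ℝ) - t ≠ 0 := ne_of_gt h1t
  have hy1d : HasDerivAt y1
      (ν * (((1+x)^3)⁻¹ * (-κ * (f κ t * G κ t) * (t^2*(1-t))⁻¹ + t⁻¹ * ((1-t)^2)⁻¹))) x := by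
    have hFc : HasDerivAt (fun x : ℝ => F κ (x/(1+x)))
        ((f κ t * G κ t) * ((1+x)^2)⁻¹) x :=
      by have := (F_hasDerivAt hκ hm).comp x (hτd x hx); exact this
    have hfc : HasDerivAt (fun x : ℝ => f κ (x/(1+x)))
        ((-κ * f κ t * (t^2*(1-t))⁻¹) * ((1+x)^2)⁻¹) x :=
      by have := (f_hasDerivAt hκ hm).comp x (hτd x hx); exact this
    have hGc : HasDerivAt (fun x : ℝ => G κ (x/(1+x)))
        (g κ t * ((1+x)^2)⁻¹) x :=
      by have := (G_hasDerivAt hκ hm).comp x (hτd x hx); exact this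
    have hinv : HasDerivAt (fun x : ℝ => (1+x)⁻¹) (-(((1+x)^2)⁻¹)) x := by
      have := (hasDerivAt_inv (ne_of_gt h1x)).comp x
        ((hasDerivAt_id x).const_add (1:ℝ))
      exact this.congr_deriv (mul_one _)
    have h2 := ((hFc.const_mul ν)).add ((((hfc.mul hGc).const_mul ν)).mul hinv)
    have hy1eq : y1 = fun x => ν * F κ (x/(1+x)) +
        (ν * (f κ (x/(1+x)) * G κ (x/(1+x)))) * (1+x)⁻¹ := by
      funext z; rw [hy1def]
    rw [hy1eq]
    refine h2.congr_deriv (Eq.symm ?_)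
    have hfg : f κ t * g κ t = t⁻¹ * ((1-t)^2)⁻¹ := fg_eq hκ hm
    exact val_id ν κ x (f κ t) (g κ t) (G κ t) t htne
      h1tne h1xne (ne_of_gt (f_pos hm)) hfg
  -- put it together
  have hd1 : deriv y x = y1 x := hderiv_eq x hx
  have hd2 : deriv (deriv y) x = deriv y1 x := by
    apply Filter.EventuallyEq.deriv_eq
    filter_upwards [isOpen_Ioi.mem_nhds hx] with z hz
    exact hderiv_eq z hz
  rw [hd2, hy1d.deriv, hd1, hy1def, hyform x hx]
  simp only
  have ht : t = x/(1+x) := htdef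
  rw [ht]
  field_simp
  ring

end S0

end S0aux

/-- the explicit double-integral function `y` solves
`x² y'' + κ(1+x) y' − κ y = ν x` on `(0,∞)`. -/
theorem stmt0 (κ ν : ℝ) (hκ : 0 < κ) (hν : 0 < ν)
    (y : ℝ → ℝ)
    (hy : ∀ x : ℝ, y x =
      ν * (1 + x) * ∫ v in (0:ℝ)..(x / (1 + x)),
        ((1 - v) / v) ^ κ * Real.exp (κ / v) *
          ∫ u in (0:ℝ)..v, u ^ (κ - 1) * (1 - u) ^ (-(κ + 2)) * Real.exp (-κ / u)) :
    ∀ x ∈ Set.Ioi (0:ℝ),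
      x ^ 2 * deriv (deriv y) x + κ * (1 + x) * deriv y x - κ * y x = ν * x := S0.main κ ν hκ hν y hy
end

section
/- The function z(u) = ν ∫₀^u ((1−v)/v)^κ e^{κ/v} ∫₀^v s^{κ−1}/(1−s)^{κ+2} e^{−κ/s} ds dv satisfies u²(1−u) z''(u) + κ z'(u) = ν u/(1−u) for all u ∈ (0,1). -/
open Real Set intervalIntegral MeasureTheory Filter Topology

noncomputable def fI (κ s : ℝ) : ℝ := s ^ (κ - 1) * (1 - s) ^ (-(κ + 2)) * Real.exp (-κ / s)
noncomputable def FI (κ v : ℝ) : ℝ := ∫ s in (0:ℝ)..v, fI κ s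
noncomputable def AI (κ v : ℝ) : ℝ := ((1 - v) / v) ^ κ * Real.exp (κ / v)
noncomputable def gI (κ v : ℝ) : ℝ := AI κ v * FI κ v
noncomputable def Hfun (κ s : ℝ) : ℝ := if 0 < s then Real.exp (-κ / s) else 0
noncomputable def hfun (κ s : ℝ) : ℝ := if 0 < s then κ / s ^ 2 * Real.exp (-κ / s) else 0

lemma exp_neg_div_le {κ : ℝ} (hκ : 0 < κ) {s : ℝ} (hs : 0 < s) :
    Real.exp (-κ / s) ≤ 4 * s ^ 2 / κ ^ 2 := by
  have h1 : κ / (2 * s) ≤ Real.exp (κ / (2 * s)) := by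
    have := Real.add_one_le_exp (κ / (2 * s)); linarith
  have key : κ ^ 2 / (4 * s ^ 2) ≤ Real.exp (κ / s) := by
    calc κ ^ 2 / (4 * s ^ 2) = (κ / (2 * s)) ^ 2 := by ring
    _ ≤ Real.exp (κ / (2 * s)) ^ 2 := by
        apply pow_le_pow_left₀ (by positivity) h1
    _ = Real.exp (κ / s) := by rw [sq, ← Real.exp_add]; congr 1; field_simp; ring
  have hpos : (0:ℝ) < κ ^ 2 / (4 * s ^ 2) := by positivity
  rw [neg_div, Real.exp_neg]
  calc (Real.exp (κ / s))⁻¹ ≤ (κ ^ 2 / (4 * s ^ 2))⁻¹ := by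
        apply inv_anti₀ hpos key
  _ = 4 * s ^ 2 / κ ^ 2 := by rw [inv_div]

lemma Hfun_hasDerivAt_pos (κ : ℝ) {s : ℝ} (hs : 0 < s) :
    HasDerivAt (Hfun κ) (hfun κ s) s := by
  have h1 : HasDerivAt (fun t : ℝ => -κ / t) (κ / s ^ 2) s := by
    have h := (hasDerivAt_inv (ne_of_gt hs)).const_mul (-κ)
    refine h.congr_deriv ?_
    ring
  have h2 := h1.exp
  have heq : Hfun κ =ᶠ[𝓝 s] fun t => Real.exp (-κ / t) := by
    filter_upwards [IsOpen.mem_nhds isOpen_Ioi hs] with t ht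
    simp [Hfun, Set.mem_Ioi.mp ht]
  have hval : hfun κ s = Real.exp (-κ / s) * (κ / s ^ 2) := by
    rw [hfun, if_pos hs]; ring
  rw [hval]
  exact h2.congr_of_eventuallyEq heq

lemma Hfun_hasDerivAt_zero {κ : ℝ} (hκ : 0 < κ) : HasDerivAt (Hfun κ) 0 0 := by
  rw [hasDerivAt_iff_tendsto_slope]
  refine squeeze_zero_norm (a := fun t : ℝ => 4 * |t| / κ ^ 2) (fun t => ?_) ?_
  · 
    rw [slope_def_field]
    by_cases ht : 0 < t
    · rw [Hfun, if_pos ht, Hfun, if_neg (lt_irrefl 0), sub_zero, sub_zero]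
      rw [Real.norm_eq_abs, abs_div, abs_of_pos (Real.exp_pos _), abs_of_pos ht]
      rw [div_le_div_iff₀ ht (by positivity)]
      calc Real.exp (-κ / t) * κ ^ 2 ≤ (4 * t ^ 2 / κ ^ 2) * κ ^ 2 := by
            apply mul_le_mul_of_nonneg_right (exp_neg_div_le hκ ht) (by positivity)
        _ = 4 * t * t := by rw [div_mul_cancel₀ _ (by positivity)]; ring
    · rw [Hfun, if_neg ht, Hfun, if_neg (lt_irrefl 0)]
      simp [abs_nonneg]
      positivity
  · have : ContinuousAt (fun t : ℝ => 4 * |t| / κ ^ 2) 0 := by fun_prop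
    have h0 := this.tendsto
    simp only [abs_zero, mul_zero, zero_div] at h0
    exact h0.mono_left nhdsWithin_le_nhds

lemma hfun_measurable (κ : ℝ) : Measurable (hfun κ) := by
  unfold hfun
  apply Measurable.ite measurableSet_Ioi <;> fun_prop

lemma hfun_nonneg {κ : ℝ} (hκ : 0 < κ) (s : ℝ) : 0 ≤ hfun κ s := by
  unfold hfun; split
  · positivity
  · exact le_rfl

lemma hfun_le {κ : ℝ} (hκ : 0 < κ) (s : ℝ) : hfun κ s ≤ 4 / κ := by
  unfold hfun; split
  · rename_i hs
    calc κ / s ^ 2 * Real.exp (-κ / s) ≤ κ / s ^ 2 * (4 * s ^ 2 / κ ^ 2) := by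
          apply mul_le_mul_of_nonneg_left (exp_neg_div_le hκ hs) (by positivity)
      _ = 4 / κ := by field_simp
  · positivity

lemma hfun_intervalIntegrable {κ : ℝ} (hκ : 0 < κ) {v : ℝ} (hv : 0 ≤ v) :
    IntervalIntegrable (hfun κ) volume 0 v := by
  rw [intervalIntegrable_iff_integrableOn_Ioc_of_le hv]
  apply Measure.integrableOn_of_bounded (M := 4 / κ) measure_Ioc_lt_top.ne
    (hfun_measurable κ).aestronglyMeasurable
  filter_upwards with s
  rw [Real.norm_eq_abs, abs_of_nonneg (hfun_nonneg hκ s)]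
  exact hfun_le hκ s

lemma hfun_integral {κ : ℝ} (hκ : 0 < κ) {v : ℝ} (hv : 0 < v) :
    ∫ s in (0:ℝ)..v, hfun κ s = Real.exp (-κ / v) := by
  have key : ∀ t ∈ uIcc (0:ℝ) v, HasDerivAt (Hfun κ) (hfun κ t) t := by
    intro t ht
    rw [uIcc_of_le hv.le] at ht
    rcases eq_or_lt_of_le ht.1 with h | h
    · rw [← h]
      have h0 : hfun κ (0:ℝ) = 0 := by rw [hfun, if_neg (lt_irrefl 0)]
      rw [h0]
      exact Hfun_hasDerivAt_zero hκ
    · exact Hfun_hasDerivAt_pos κ h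
  rw [intervalIntegral.integral_eq_sub_of_hasDerivAt key (hfun_intervalIntegrable hκ hv.le)]
  rw [Hfun, if_pos hv, Hfun, if_neg (lt_irrefl 0), sub_zero]

lemma fI_nonneg (κ : ℝ) {s : ℝ} (h0 : 0 ≤ s) (h1 : s ≤ 1) : 0 ≤ fI κ s := by
  unfold fI
  have h1s : (0:ℝ) ≤ 1 - s := by linarith
  positivity

lemma fI_measurable (κ : ℝ) : Measurable (fI κ) := by
  unfold fI; fun_prop

lemma fI_continuousAt (κ : ℝ) {s : ℝ} (hs : 0 < s) (hs1 : s < 1) : ContinuousAt (fI κ) s := by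
  unfold fI
  have h1s : (0:ℝ) < 1 - s := by linarith
  apply ContinuousAt.mul
  apply ContinuousAt.mul
  · exact Real.continuousAt_rpow_const s _ (Or.inl (ne_of_gt hs))
  · exact (continuousAt_const.sub continuousAt_id).rpow_const (Or.inl (ne_of_gt h1s))
  · exact Real.continuous_exp.continuousAt.comp
      ((continuousAt_const.div continuousAt_id (ne_of_gt hs)))

lemma fI_le {κ : ℝ} (hκ : 0 < κ) {v s : ℝ} (hv1 : v < 1) (hs : 0 < s) (hsv : s ≤ v) :
    fI κ s ≤ v ^ (κ + 1) * (1 - v) ^ (-(κ + 2)) / κ * hfun κ s := by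
  have hv : 0 < v := lt_of_lt_of_le hs hsv
  have h1s : (0:ℝ) < 1 - s := by linarith [lt_of_le_of_lt hsv hv1]
  have h1v : (0:ℝ) < 1 - v := by linarith
  rw [show hfun κ s = κ / s ^ 2 * Real.exp (-κ / s) from if_pos hs]
  have hsplit : s ^ (κ - 1) = s ^ (κ + 1) / s ^ (2:ℕ) := by
    rw [← Real.rpow_natCast s 2, ← Real.rpow_sub hs]; push_cast; congr 1; ring
  have e1 : s ^ (κ + 1) ≤ v ^ (κ + 1) := Real.rpow_le_rpow hs.le hsv (by linarith)
  have e2 : (1 - s) ^ (-(κ + 2)) ≤ (1 - v) ^ (-(κ + 2)) :=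
    Real.rpow_le_rpow_of_nonpos h1v (by linarith) (by linarith)
  have hrw : v ^ (κ + 1) * (1 - v) ^ (-(κ + 2)) / κ * (κ / s ^ 2 * Real.exp (-κ / s))
      = v ^ (κ + 1) / s ^ (2:ℕ) * (1 - v) ^ (-(κ + 2)) * Real.exp (-κ / s) := by
    field_simp
  rw [fI, hsplit, hrw]
  gcongr

lemma fI_intervalIntegrable {κ : ℝ} (hκ : 0 < κ) {v : ℝ} (hv : 0 ≤ v) (hv1 : v < 1) :
    IntervalIntegrable (fI κ) volume 0 v := by
  rw [intervalIntegrable_iff_integrableOn_Ioc_of_le hv]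
  apply Measure.integrableOn_of_bounded
    (M := v ^ (κ + 1) * (1 - v) ^ (-(κ + 2)) / κ * (4 / κ)) measure_Ioc_lt_top.ne
    (fI_measurable κ).aestronglyMeasurable
  filter_upwards [ae_restrict_mem measurableSet_Ioc] with s hs
  have h1v : (0:ℝ) < 1 - v := by linarith
  rw [Real.norm_eq_abs, abs_of_nonneg (fI_nonneg κ hs.1.le (by linarith [hs.2]))]
  calc fI κ s ≤ v ^ (κ + 1) * (1 - v) ^ (-(κ + 2)) / κ * hfun κ s :=
        fI_le hκ hv1 hs.1 hs.2
    _ ≤ v ^ (κ + 1) * (1 - v) ^ (-(κ + 2)) / κ * (4 / κ) := by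
        apply mul_le_mul_of_nonneg_left (hfun_le hκ s)
        have : 0 ≤ v ^ (κ+1) := Real.rpow_nonneg hv _
        have : 0 ≤ (1-v) ^ (-(κ+2)) := Real.rpow_nonneg h1v.le _
        positivity

lemma FI_nonneg (κ : ℝ) {v : ℝ} (hv : 0 ≤ v) (hv1 : v ≤ 1) : 0 ≤ FI κ v :=
  intervalIntegral.integral_nonneg hv (fun s hs => fI_nonneg κ hs.1 (le_trans hs.2 hv1))

lemma FI_le {κ : ℝ} (hκ : 0 < κ) {v : ℝ} (hv : 0 < v) (hv1 : v < 1) :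
    FI κ v ≤ v ^ (κ + 1) * (1 - v) ^ (-(κ + 2)) / κ * Real.exp (-κ / v) := by
  set C := v ^ (κ + 1) * (1 - v) ^ (-(κ + 2)) / κ with hC
  rw [FI, intervalIntegral.integral_of_le hv.le]
  have h1 : IntegrableOn (fI κ) (Ioc 0 v) volume :=
    (intervalIntegrable_iff_integrableOn_Ioc_of_le hv.le).mp
      (fI_intervalIntegrable hκ hv.le hv1)
  have h2 : IntegrableOn (fun s => C * hfun κ s) (Ioc 0 v) volume :=
    ((intervalIntegrable_iff_integrableOn_Ioc_of_le hv.le).mp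
      (hfun_intervalIntegrable hκ hv.le)).const_mul C
  calc ∫ s in Ioc (0:ℝ) v, fI κ s ≤ ∫ s in Ioc (0:ℝ) v, C * hfun κ s :=
      setIntegral_mono_on h1 h2 measurableSet_Ioc (fun s hs => fI_le hκ hv1 hs.1 hs.2)
    _ = C * ∫ s in Ioc (0:ℝ) v, hfun κ s := by rw [MeasureTheory.integral_const_mul]
    _ = C * Real.exp (-κ / v) := by
        rw [← intervalIntegral.integral_of_le hv.le, hfun_integral hκ hv]

lemma AI_pos (κ : ℝ) {v : ℝ} (hv : 0 < v) (hv1 : v < 1) : 0 < AI κ v := by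
  unfold AI
  have h : (0:ℝ) < (1 - v) / v := div_pos (by linarith) hv
  positivity

lemma AI_eq (κ : ℝ) {v : ℝ} (hv : 0 < v) (hv1 : v < 1) :
    AI κ v = Real.exp ((Real.log (1 - v) - Real.log v) * κ + κ / v) := by
  unfold AI
  have h : (0:ℝ) < (1 - v) / v := div_pos (by linarith) hv
  rw [Real.rpow_def_of_pos h, Real.log_div (by linarith) (ne_of_gt hv), ← Real.exp_add]

lemma AI_hasDerivAt (κ : ℝ) {u : ℝ} (hu : 0 < u) (hu1 : u < 1) :
    HasDerivAt (AI κ) (-κ / (u ^ 2 * (1 - u)) * AI κ u) u := by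
  have h1u : (0:ℝ) < 1 - u := by linarith
  have hψ : HasDerivAt (fun v => (Real.log (1 - v) - Real.log v) * κ + κ / v)
      (-κ / (u ^ 2 * (1 - u))) u := by
    have l1 : HasDerivAt (fun v : ℝ => Real.log (1 - v)) (-1 / (1 - u)) u := by
      have h0 : HasDerivAt (fun v : ℝ => 1 - v) (-1) u := by
        simpa using (hasDerivAt_id u).const_sub 1
      exact h0.log (ne_of_gt h1u)
    have l2 : HasDerivAt Real.log u⁻¹ u := Real.hasDerivAt_log (ne_of_gt hu)
    have l3 : HasDerivAt (fun v : ℝ => κ / v) (-(κ / u ^ 2)) u := by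
      have h := (hasDerivAt_inv (ne_of_gt hu)).const_mul κ
      refine h.congr_deriv ?_
      ring
    have h := ((l1.sub l2).mul_const κ).add l3
    refine h.congr_deriv ?_
    field_simp
    ring
  have hd := hψ.exp
  rw [← AI_eq κ hu hu1] at hd
  have heq : AI κ =ᶠ[𝓝 u]
      fun v => Real.exp ((Real.log (1 - v) - Real.log v) * κ + κ / v) := by
    filter_upwards [IsOpen.mem_nhds isOpen_Ioo (⟨hu, hu1⟩ : u ∈ Ioo (0:ℝ) 1)] with v hv
    exact AI_eq κ hv.1 hv.2
  have := hd.congr_of_eventuallyEq heq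
  exact this.congr_deriv (by ring)

lemma FI_hasDerivAt {κ : ℝ} (hκ : 0 < κ) {u : ℝ} (hu : 0 < u) (hu1 : u < 1) :
    HasDerivAt (FI κ) (fI κ u) u := by
  apply intervalIntegral.integral_hasDerivAt_right (fI_intervalIntegrable hκ hu.le hu1)
  · exact (fI_measurable κ).stronglyMeasurable.stronglyMeasurableAtFilter
  · exact fI_continuousAt κ hu hu1

lemma gI_hasDerivAt {κ : ℝ} (hκ : 0 < κ) {u : ℝ} (hu : 0 < u) (hu1 : u < 1) :
    HasDerivAt (gI κ)
      (-κ / (u ^ 2 * (1 - u)) * AI κ u * FI κ u + AI κ u * fI κ u) u :=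
  (AI_hasDerivAt κ hu hu1).mul (FI_hasDerivAt hκ hu hu1)

lemma gI_continuousAt {κ : ℝ} (hκ : 0 < κ) {v : ℝ} (hv : 0 < v) (hv1 : v < 1) :
    ContinuousAt (gI κ) v :=
  (gI_hasDerivAt hκ hv hv1).continuousAt

lemma AI_mul_key {κ : ℝ} (hκ : 0 < κ) {v : ℝ} (hv : 0 < v) (hv1 : v < 1) :
    AI κ v * (v ^ (κ + 1) * (1 - v) ^ (-(κ + 2)) / κ * Real.exp (-κ / v))
      = v / (κ * (1 - v) ^ 2) := by
  have h1v : (0:ℝ) < 1 - v := by linarith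
  rw [AI, Real.div_rpow h1v.le hv.le, neg_div, Real.exp_neg]
  rw [show -(κ + 2) = -κ + (-2:ℝ) by ring, Real.rpow_add h1v, Real.rpow_neg h1v.le κ,
    show ((-2:ℝ)) = ((-2:ℤ):ℝ) by norm_num, Real.rpow_intCast,
    show (κ + 1 : ℝ) = κ + 1 by rfl, Real.rpow_add hv, Real.rpow_one]
  have e1 : Real.exp (κ / v) ≠ 0 := Real.exp_ne_zero _
  have e2 : (1 - v) ^ κ ≠ 0 := ne_of_gt (Real.rpow_pos_of_pos h1v κ)
  have e3 : v ^ κ ≠ 0 := ne_of_gt (Real.rpow_pos_of_pos hv κ)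
  have e4 : (1 - v) ≠ 0 := ne_of_gt h1v
  rw [zpow_neg, show ((2:ℤ)) = ((2:ℕ):ℤ) by norm_num, zpow_natCast]
  field_simp

lemma gI_le {κ : ℝ} (hκ : 0 < κ) {u v : ℝ} (hu1 : u < 1) (hv : 0 < v) (hvu : v ≤ u) :
    gI κ v ≤ u / (κ * (1 - u) ^ 2) := by
  have hv1 : v < 1 := lt_of_le_of_lt hvu hu1
  have h1v : (0:ℝ) < 1 - v := by linarith
  have h1u : (0:ℝ) < 1 - u := by linarith
  calc gI κ v ≤ AI κ v * (v ^ (κ + 1) * (1 - v) ^ (-(κ + 2)) / κ * Real.exp (-κ / v)) :=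
        mul_le_mul_of_nonneg_left (FI_le hκ hv hv1) (AI_pos κ hv hv1).le
    _ = v / (κ * (1 - v) ^ 2) := AI_mul_key hκ hv hv1
    _ ≤ u / (κ * (1 - u) ^ 2) := by
        apply div_le_div₀ (by linarith : (0:ℝ) ≤ u) hvu (by positivity)
        have h2 : (1 - u) ^ 2 ≤ (1 - v) ^ 2 := by nlinarith
        exact mul_le_mul_of_nonneg_left h2 hκ.le

lemma gI_nonneg {κ : ℝ} (hκ : 0 < κ) {v : ℝ} (hv : 0 < v) (hv1 : v < 1) : 0 ≤ gI κ v :=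
  mul_nonneg (AI_pos κ hv hv1).le (FI_nonneg κ hv.le hv1.le)

lemma gI_intervalIntegrable {κ : ℝ} (hκ : 0 < κ) {u : ℝ} (hu : 0 < u) (hu1 : u < 1) :
    IntervalIntegrable (gI κ) volume 0 u := by
  rw [intervalIntegrable_iff_integrableOn_Ioc_of_le hu.le]
  have hcont : ContinuousOn (gI κ) (Ioc 0 u) := fun v hv =>
    (gI_continuousAt hκ hv.1 (lt_of_le_of_lt hv.2 hu1)).continuousWithinAt
  refine ⟨hcont.aestronglyMeasurable measurableSet_Ioc, ?_⟩
  apply MeasureTheory.HasFiniteIntegral.restrict_of_bounded (C := u / (κ * (1 - u) ^ 2))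
    measure_Ioc_lt_top
  filter_upwards [ae_restrict_mem measurableSet_Ioc] with v hv
  rw [Real.norm_eq_abs, abs_of_nonneg (gI_nonneg hκ hv.1 (lt_of_le_of_lt hv.2 hu1))]
  exact gI_le hκ hu1 hv.1 hv.2

lemma AI_mul_fI (κ : ℝ) {u : ℝ} (hu : 0 < u) (hu1 : u < 1) :
    AI κ u * fI κ u = 1 / (u * (1 - u) ^ 2) := by
  have h1u : (0:ℝ) < 1 - u := by linarith
  rw [AI, fI, Real.div_rpow h1u.le hu.le, neg_div, Real.exp_neg]
  rw [show (κ - 1 : ℝ) = κ + (-1:ℝ) by ring, Real.rpow_add hu, Real.rpow_neg_one]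
  rw [show -(κ + 2) = -κ + (-2:ℝ) by ring, Real.rpow_add h1u, Real.rpow_neg h1u.le κ,
    show ((-2:ℝ)) = ((-2:ℤ):ℝ) by norm_num, Real.rpow_intCast]
  have e1 : Real.exp (κ / u) ≠ 0 := Real.exp_ne_zero _
  have e2 : (1 - u) ^ κ ≠ 0 := ne_of_gt (Real.rpow_pos_of_pos h1u κ)
  have e3 : u ^ κ ≠ 0 := ne_of_gt (Real.rpow_pos_of_pos hu κ)
  have e4 : (1 - u) ≠ 0 := ne_of_gt h1u
  rw [zpow_neg, show ((2:ℤ)) = ((2:ℕ):ℤ) by norm_num, zpow_natCast]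
  field_simp

/-- the explicit function `z` solves
`u²(1−u) z'' + κ z' = ν u/(1−u)` on `(0,1)`. -/
theorem stmt2 (κ ν : ℝ) (hκ : 0 < κ) (hν : 0 < ν)
    (z : ℝ → ℝ)
    (hz : ∀ u : ℝ, z u =
      ν * ∫ v in (0:ℝ)..u,
        ((1 - v) / v) ^ κ * Real.exp (κ / v) *
          ∫ s in (0:ℝ)..v, s ^ (κ - 1) * (1 - s) ^ (-(κ + 2)) * Real.exp (-κ / s)) :
    ∀ u ∈ Set.Ioo (0:ℝ) 1,
      u ^ 2 * (1 - u) * deriv (deriv z) u + κ * deriv z u = ν * u / (1 - u) := by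
  have hzfun : z = fun u => ν * ∫ v in (0:ℝ)..u, gI κ v := by
    funext u
    rw [hz u]
    rfl
  have hz' : ∀ w ∈ Set.Ioo (0:ℝ) 1, HasDerivAt z (ν * gI κ w) w := by
    intro w hw
    rw [hzfun]
    exact HasDerivAt.const_mul ν
      (intervalIntegral.integral_hasDerivAt_right (gI_intervalIntegrable hκ hw.1 hw.2)
        (ContinuousAt.stronglyMeasurableAtFilter isOpen_Ioo
          (fun x hx => gI_continuousAt hκ hx.1 hx.2) w hw)
        (gI_continuousAt hκ hw.1 hw.2))
  intro u hu
  obtain ⟨hu0, hu1⟩ := hu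
  have h1u : (0:ℝ) < 1 - u := by linarith
  have hderiv1 : Set.EqOn (deriv z) (fun w => ν * gI κ w) (Set.Ioo 0 1) :=
    fun w hw => (hz' w hw).deriv
  have hd2 : deriv z =ᶠ[𝓝 u] fun w => ν * gI κ w :=
    Filter.eventuallyEq_of_mem (isOpen_Ioo.mem_nhds ⟨hu0, hu1⟩) hderiv1
  have hz'' : deriv (deriv z) u
      = ν * (-κ / (u ^ 2 * (1 - u)) * AI κ u * FI κ u + AI κ u * fI κ u) := by
    rw [hd2.deriv_eq]
    exact (HasDerivAt.const_mul ν (gI_hasDerivAt hκ hu0 hu1)).deriv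
  rw [hz'', hderiv1 ⟨hu0, hu1⟩]
  have hAf := AI_mul_fI κ hu0 hu1
  have hcancel : u ^ 2 * (1 - u) * (-κ / (u ^ 2 * (1 - u))) = -κ := by
    field_simp
  show u ^ 2 * (1 - u) * (ν * (-κ / (u ^ 2 * (1 - u)) * AI κ u * FI κ u + AI κ u * fI κ u))
      + κ * (ν * gI κ u) = ν * u / (1 - u)
  rw [show gI κ u = AI κ u * FI κ u from rfl]
  have expand : u ^ 2 * (1 - u) * (ν * (-κ / (u ^ 2 * (1 - u)) * AI κ u * FI κ u
        + AI κ u * fI κ u)) + κ * (ν * (AI κ u * FI κ u))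
      = ν * (u ^ 2 * (1 - u) * (-κ / (u ^ 2 * (1 - u))) * (AI κ u * FI κ u)
          + u ^ 2 * (1 - u) * (AI κ u * fI κ u)) + κ * (ν * (AI κ u * FI κ u)) := by
    ring
  rw [expand, hcancel, hAf]
  field_simp
  ring
end

section
/- There exists a unique φ* ∈ (λ/c, ∞) such that (e^{κ(1+φ*)/φ*}/φ*^κ) · ∫₀^{φ*/(1+φ*)} u^{κ−1}/(1−u)^{κ+2} e^{−κ/u} du = μ²/(2c). -/
open Real Set intervalIntegral Filter Topology

namespace Stmt3Aux



noncomputable def W (k t : ℝ) : ℝ :=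
  if t ≤ 0 then 0 else t ^ (k - 1) * (1 + t) * Real.exp (-(k * (1 + t) / t))

noncomputable def g (k t : ℝ) : ℝ := t ^ k * Real.exp (-(k * (1 + t) / t))

lemma tendstoA {k : ℝ} (hk : 0 < k) :
    Tendsto (fun t : ℝ => t ^ (k - 1) * Real.exp (-(k / t))) (𝓝[>] (0:ℝ)) (𝓝 0) := by
  have h := (tendsto_rpow_mul_exp_neg_mul_atTop_nhds_zero (1 - k) k hk).comp
    tendsto_inv_nhdsGT_zero
  refine h.congr' ?_
  filter_upwards [self_mem_nhdsWithin] with t (ht : 0 < t)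
  simp only [Function.comp]
  rw [Real.inv_rpow ht.le, ← Real.rpow_neg ht.le]
  ring_nf

lemma W_eq {k t : ℝ} (ht : 0 < t) :
    W k t = (t ^ (k - 1) * Real.exp (-(k / t))) * ((1 + t) * Real.exp (-k)) := by
  rw [W, if_neg (not_le.2 ht)]
  rw [show -(k * (1 + t) / t) = -(k / t) + -k by field_simp; ring, Real.exp_add]
  ring

lemma tendsto_W_zero {k : ℝ} (hk : 0 < k) : Tendsto (W k) (𝓝[>] (0:ℝ)) (𝓝 0) := by
  have h2 : Tendsto (fun t : ℝ => (1 + t) * Real.exp (-k)) (𝓝[>] (0:ℝ))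
      (𝓝 ((1 + 0) * Real.exp (-k))) :=
    Tendsto.mono_left
      (((continuous_const.add continuous_id).mul continuous_const).tendsto 0)
      nhdsWithin_le_nhds
  have h := (tendstoA hk).mul h2
  rw [zero_mul] at h
  refine h.congr' ?_
  filter_upwards [self_mem_nhdsWithin] with x (hx : (0:ℝ) < x)
  exact (W_eq hx).symm

lemma continuous_W {k : ℝ} (hk : 0 < k) : Continuous (W k) := by
  rw [continuous_iff_continuousAt]
  intro t
  rcases lt_trichotomy t 0 with h | h | h
  · refine ContinuousAt.congr_of_eventuallyEq (f := fun _ => (0:ℝ)) continuousAt_const ?_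
    filter_upwards [Iio_mem_nhds h] with x (hx : x < 0)
    simp [W, hx.le]
  · subst h
    have h0 : W k 0 = 0 := by simp [W]
    rw [ContinuousAt, h0]
    have key : Tendsto (W k) (𝓝[≤] (0:ℝ) ⊔ 𝓝[>] (0:ℝ)) (𝓝 0) := by
      rw [tendsto_sup]
      refine ⟨?_, tendsto_W_zero hk⟩
      refine tendsto_const_nhds.congr' ?_
      filter_upwards [self_mem_nhdsWithin] with x (hx : x ≤ 0)
      simp [W, hx]
    rwa [nhdsLE_sup_nhdsGT] at key
  · have hc : ContinuousAt (fun t : ℝ => t ^ (k - 1) * (1 + t) *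
        Real.exp (-(k * (1 + t) / t))) t := by
      have h1 : ContinuousAt (fun t : ℝ => t ^ (k - 1)) t :=
        Real.continuousAt_rpow_const t _ (Or.inl h.ne')
      have h2 : ContinuousAt (fun t : ℝ => -(k * (1 + t) / t)) t :=
        ((continuousAt_const.mul (continuousAt_const.add continuousAt_id)).div
          continuousAt_id h.ne').neg
      exact (h1.mul (continuousAt_const.add continuousAt_id)).mul
        (Real.continuous_exp.continuousAt.comp h2)
    refine hc.congr_of_eventuallyEq ?_
    filter_upwards [Ioi_mem_nhds h] with x (hx : 0 < x)
    simp [W, not_le.2 hx]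




lemma g_pos {k t : ℝ} (ht : 0 < t) : 0 < g k t :=
  mul_pos (Real.rpow_pos_of_pos ht k) (Real.exp_pos _)

lemma g_mono {k s t : ℝ} (hk : 0 < k) (hs : 0 < s) (hst : s ≤ t) : g k s ≤ g k t := by
  have ht : 0 < t := hs.trans_le hst
  apply mul_le_mul (Real.rpow_le_rpow hs.le hst hk.le) _ (Real.exp_pos _).le
    (Real.rpow_nonneg ht.le k)
  apply Real.exp_le_exp.2
  rw [neg_le_neg_iff]
  rw [div_le_div_iff₀ ht hs]
  nlinarith

lemma W_eq_g {k t : ℝ} (ht : 0 < t) : W k t = (1 + t) / t * g k t := by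
  rw [W, if_neg (not_le.2 ht), g, show t ^ (k-1) = t ^ k / t by
    rw [Real.rpow_sub ht, Real.rpow_one]]
  ring

lemma hasDerivAt_g {k t : ℝ} (ht : 0 < t) :
    HasDerivAt (g k) (k * (1 + t) / t ^ 2 * g k t) t := by
  have hu : HasDerivAt (fun t : ℝ => -(k * (1 + t) / t)) (k / t ^ 2) t := by
    have h1 : HasDerivAt (fun t : ℝ => k * (1 + t)) k t := by
      simpa using ((hasDerivAt_id t).const_add (1:ℝ)).const_mul k
    have := (h1.div (hasDerivAt_id t) ht.ne').neg
    refine this.congr_deriv ?_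
    simp only [id]
    ring
  have hrp : HasDerivAt (fun t : ℝ => t ^ k) (k * t ^ (k - 1)) t :=
    Real.hasDerivAt_rpow_const (Or.inl ht.ne')
  have := hrp.mul hu.exp
  refine this.congr_deriv ?_
  rw [g, show t ^ (k-1) = t ^ k / t by rw [Real.rpow_sub ht, Real.rpow_one]]
  field_simp
  ring

lemma g_half {k φ : ℝ} (hk : 0 < k) (hφ : 0 < φ) :
    g k (φ / 2) = 2 ^ (-k) * Real.exp (-(k / φ)) * g k φ := by
  rw [g, g, show (φ/2 : ℝ) = φ / 2 from rfl, Real.div_rpow hφ.le (by norm_num)]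
  rw [show -(k * (1 + φ/2) / (φ/2)) = -(k/φ) + -(k * (1+φ)/φ) by field_simp; ring,
    Real.exp_add, Real.rpow_neg (by norm_num : (0:ℝ) ≤ 2)]
  rw [div_eq_mul_inv]
  ring


noncomputable def G (k φ : ℝ) : ℝ := ∫ t in (0:ℝ)..φ, W k t

lemma W_nonneg (k t : ℝ) : 0 ≤ W k t := by
  rw [W]
  split
  · exact le_refl _
  · next h =>
    have ht : 0 < t := not_le.1 h
    exact mul_nonneg (mul_nonneg (Real.rpow_nonneg ht.le _) (by linarith))
      (Real.exp_pos _).le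

lemma hasDerivAt_G {k : ℝ} (hk : 0 < k) (x : ℝ) : HasDerivAt (G k) (W k x) x :=
  intervalIntegral.integral_hasDerivAt_right
    ((continuous_W hk).intervalIntegrable _ _)
    ((continuous_W hk).stronglyMeasurableAtFilter _ _)
    (continuous_W hk).continuousAt

lemma continuousOn_gderiv {k : ℝ} :
    ContinuousOn (fun t => k * (1 + t) / t ^ 2 * g k t) (Ioi (0:ℝ)) := by
  intro t ht
  have ht' : (0:ℝ) < t := ht
  exact (((continuousAt_const.mul (continuousAt_const.add continuousAt_id)).div
    (continuousAt_pow _ _) (pow_ne_zero _ ht'.ne')).mul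
    (hasDerivAt_g ht').continuousAt).continuousWithinAt

lemma int_W_le {k a b C : ℝ} (hk : 0 < k) (ha : 0 < a) (hab : a ≤ b) (hbC : b ≤ C * k) :
    (∫ t in a..b, W k t) ≤ C * (g k b - g k a) := by
  have hIcc : Icc a b ⊆ Ioi (0:ℝ) := fun t htt => lt_of_lt_of_le ha htt.1
  have huIcc : uIcc a b = Icc a b := uIcc_of_le hab
  have hftc : (∫ t in a..b, k * (1 + t) / t ^ 2 * g k t) = g k b - g k a := by
    apply intervalIntegral.integral_eq_sub_of_hasDerivAt
    · intro t htt
      rw [huIcc] at htt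
      exact hasDerivAt_g (hIcc htt)
    · apply ContinuousOn.intervalIntegrable
      rw [huIcc]
      exact continuousOn_gderiv.mono hIcc
  rw [← hftc, ← intervalIntegral.integral_const_mul]
  apply intervalIntegral.integral_mono_on hab
    ((continuous_W hk).intervalIntegrable _ _)
  · apply ContinuousOn.intervalIntegrable
    rw [huIcc]
    exact continuousOn_const.mul (continuousOn_gderiv.mono hIcc)
  · intro t htt
    have ht : 0 < t := hIcc htt
    have htC : t ≤ C * k := htt.2.trans hbC
    rw [W_eq_g ht]
    have hg := (g_pos (k := k) ht).le
    have h2 : (0:ℝ) < t ^ 2 := by positivity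
    have h : (1 + t) / t ≤ C * (k * (1 + t) / t ^ 2) := by
      rw [mul_div_assoc' C, div_le_div_iff₀ ht h2]
      nlinarith [mul_nonneg (mul_nonneg (sub_nonneg.2 htC) (by linarith : (0:ℝ) ≤ 1 + t)) ht.le]
    calc (1 + t) / t * g k t ≤ C * (k * (1 + t) / t ^ 2) * g k t :=
          mul_le_mul_of_nonneg_right h hg
      _ = C * (k * (1 + t) / t ^ 2 * g k t) := by ring

lemma G_le {k φ : ℝ} (hk : 0 < k) (hφ : 0 < φ) :
    G k φ ≤ φ / k * g k φ - φ / (2 * k) * g k (φ / 2) := by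
  have hφ2 : 0 < φ / 2 := by linarith
  have hc : 0 ≤ φ / (2 * k) := by positivity
  have hAB : φ / k = 2 * (φ / (2 * k)) := by field_simp
  have key : ∀ ε ∈ Ioc (0:ℝ) (φ/2),
      G k φ - G k ε ≤ φ / k * g k φ - φ / (2 * k) * g k (φ / 2) := by
    intro ε hε
    have h1 : (∫ t in ε..(φ/2), W k t) ≤ (φ/(2*k)) * (g k (φ/2) - g k ε) :=
      int_W_le hk hε.1 hε.2 (le_of_eq (by field_simp))
    have h2 : (∫ t in (φ/2)..φ, W k t) ≤ (φ/k) * (g k φ - g k (φ/2)) :=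
      int_W_le hk hφ2 (by linarith) (le_of_eq (by field_simp))
    have hsplit : G k φ - G k ε
        = (∫ t in ε..(φ/2), W k t) + ∫ t in (φ/2)..φ, W k t := by
      rw [intervalIntegral.integral_add_adjacent_intervals
        ((continuous_W hk).intervalIntegrable _ _)
        ((continuous_W hk).intervalIntegrable _ _)]
      exact intervalIntegral.integral_interval_sub_left
        ((continuous_W hk).intervalIntegrable _ _)
        ((continuous_W hk).intervalIntegrable _ _)
    have hgε : 0 ≤ g k ε := (g_pos hε.1).le
    rw [hsplit, hAB] at *
    nlinarith [mul_nonneg hc hgε]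
  have hGcont : Tendsto (fun ε => G k φ - G k ε) (𝓝[>] (0:ℝ)) (𝓝 (G k φ)) := by
    have h := (hasDerivAt_G hk 0).continuousAt
    have h0 : G k 0 = 0 := intervalIntegral.integral_same
    have h2 := (tendsto_const_nhds (x := G k φ) (f := 𝓝[>] (0:ℝ))).sub
      (h.tendsto.mono_left nhdsWithin_le_nhds)
    rwa [h0, sub_zero] at h2
  refine le_of_tendsto hGcont ?_
  filter_upwards [Ioc_mem_nhdsGT_of_mem ⟨le_refl (0:ℝ), hφ2⟩] with ε hε
  exact key ε hε

lemma G_ge {k φ : ℝ} (hk : 0 < k) (hφ : 1 ≤ φ) :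
    φ / 2 * (2 ^ (-k) * Real.exp (-k)) * g k φ ≤ G k φ := by
  have hφ0 : (0:ℝ) < φ := lt_of_lt_of_le one_pos hφ
  have hφ2 : 0 < φ / 2 := by linarith
  have hsplit : G k φ = (∫ t in (0:ℝ)..(φ/2), W k t) + ∫ t in (φ/2)..φ, W k t := by
    rw [G, ← intervalIntegral.integral_add_adjacent_intervals
      ((continuous_W hk).intervalIntegrable _ _)
      ((continuous_W hk).intervalIntegrable _ _)]
  have h1 : 0 ≤ ∫ t in (0:ℝ)..(φ/2), W k t :=
    intervalIntegral.integral_nonneg (by linarith) (fun t _ => W_nonneg k t)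
  have h2 : (φ/2) * g k (φ/2) ≤ ∫ t in (φ/2)..φ, W k t := by
    have hmono := intervalIntegral.integral_mono_on (f := fun _ => g k (φ/2)) (g := W k)
      (by linarith : φ/2 ≤ φ) (intervalIntegrable_const (μ := MeasureTheory.volume))
      ((continuous_W hk).intervalIntegrable _ _) ?_
    · rwa [intervalIntegral.integral_const, smul_eq_mul,
        show φ - φ/2 = φ/2 by ring] at hmono
    · intro t htt
      have ht : 0 < t := lt_of_lt_of_le hφ2 htt.1
      calc g k (φ/2) ≤ g k t := g_mono hk hφ2 htt.1
        _ = 1 * g k t := (one_mul _).symm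
        _ ≤ (1 + t)/t * g k t := by
            apply mul_le_mul_of_nonneg_right _ (g_pos ht).le
            rw [le_div_iff₀ ht]; linarith
        _ = W k t := (W_eq_g ht).symm
  have h3 : 2 ^ (-k) * Real.exp (-k) * g k φ ≤ g k (φ/2) := by
    rw [g_half hk hφ0]
    apply mul_le_mul_of_nonneg_right _ (g_pos hφ0).le
    apply mul_le_mul_of_nonneg_left _ (by positivity)
    exact Real.exp_le_exp.2 (neg_le_neg_iff.2 (div_le_self hk.le hφ))
  nlinarith [mul_le_mul_of_nonneg_left h3 hφ2.le]

noncomputable def F (k φ : ℝ) : ℝ := G k φ / g k φ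

lemma G_lt' {k φ : ℝ} (hk : 0 < k) (hφ : 0 < φ) : k * G k φ < φ * g k φ := by
  have h := G_le hk hφ
  have h2 := mul_le_mul_of_nonneg_left h hk.le
  have e1 : k * (φ / k * g k φ - φ / (2 * k) * g k (φ / 2))
      = φ * g k φ - φ / 2 * g k (φ / 2) := by field_simp
  rw [e1] at h2
  nlinarith [g_pos (k := k) (half_pos hφ)]

lemma F_lt {k φ : ℝ} (hk : 0 < k) (hφ : 0 < φ) : F k φ < φ / k := by
  rw [F, div_lt_div_iff₀ (g_pos hφ) hk]
  nlinarith [G_lt' hk hφ]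

lemma F_ge {k φ : ℝ} (hk : 0 < k) (hφ : 1 ≤ φ) :
    φ / 2 * (2 ^ (-k) * Real.exp (-k)) ≤ F k φ := by
  have hφ0 : (0:ℝ) < φ := lt_of_lt_of_le one_pos hφ
  rw [F, le_div_iff₀ (g_pos hφ0)]
  exact G_ge hk hφ

lemma hasDerivAt_F {k φ : ℝ} (hk : 0 < k) (hφ : 0 < φ) :
    HasDerivAt (F k)
      ((W k φ * g k φ - G k φ * (k * (1 + φ) / φ ^ 2 * g k φ)) / (g k φ) ^ 2) φ :=
  (hasDerivAt_G hk φ).div (hasDerivAt_g hφ) (g_pos hφ).ne'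

lemma deriv_F_pos {k φ : ℝ} (hk : 0 < k) (hφ : 0 < φ) :
    0 < (W k φ * g k φ - G k φ * (k * (1 + φ) / φ ^ 2 * g k φ)) / (g k φ) ^ 2 := by
  have hg := g_pos (k := k) hφ
  apply div_pos _ (by positivity)
  rw [W_eq_g hφ]
  have hid : (1 + φ) / φ * g k φ * g k φ - G k φ * (k * (1 + φ) / φ ^ 2 * g k φ)
      = ((1 + φ) * g k φ / φ ^ 2) * (φ * g k φ - k * G k φ) := by
    field_simp
  rw [hid]
  exact mul_pos (div_pos (mul_pos (by linarith) hg) (by positivity))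
    (sub_pos.2 (G_lt' hk hφ))

lemma strictMonoOn_F {k : ℝ} (hk : 0 < k) : StrictMonoOn (F k) (Ioi (0:ℝ)) := by
  apply strictMonoOn_of_deriv_pos (convex_Ioi 0)
  · intro x hx
    exact (hasDerivAt_F hk hx).continuousAt.continuousWithinAt
  · intro x hx
    rw [interior_Ioi] at hx
    rw [(hasDerivAt_F hk hx).deriv]
    exact deriv_F_pos hk hx

lemma main_aux (k m : ℝ) (hk : 0 < k) (hm : 0 < m) :
    (∃! φ : ℝ, 0 < φ ∧ F k φ = m) ∧ ∀ φ : ℝ, 0 < φ → F k φ = m → k * m < φ := by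
  have hbound : ∀ φ : ℝ, 0 < φ → F k φ = m → k * m < φ := by
    intro φ hφ hF
    have h := F_lt hk hφ
    rw [hF, lt_div_iff₀ hk] at h
    nlinarith
  refine ⟨?_, hbound⟩
  obtain ⟨c, hc⟩ : ∃ c, c = (2:ℝ) ^ (-k) * Real.exp (-k) := ⟨_, rfl⟩
  have hcpos : 0 < c := by rw [hc]; positivity
  obtain ⟨a, ha⟩ : ∃ a, a = min 1 (k * m) / 2 := ⟨_, rfl⟩
  have hkm : 0 < k * m := mul_pos hk hm
  have ha0 : 0 < a := by rw [ha]; exact div_pos (lt_min one_pos hkm) two_pos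
  have haF : F k a < m := by
    have h1 := F_lt hk ha0
    have h2 : a ≤ k * m / 2 := by rw [ha]; linarith [min_le_right (1:ℝ) (k * m)]
    have h3 : a / k < m := by rw [div_lt_iff₀ hk]; nlinarith
    linarith
  obtain ⟨b, hb⟩ : ∃ b, b = max 1 (2 * m / c) + 1 := ⟨_, rfl⟩
  have hb1 : 1 ≤ b := by rw [hb]; linarith [le_max_left (1:ℝ) (2 * m / c)]
  have hbF : m < F k b := by
    have h1 := F_ge hk hb1
    rw [← hc] at h1
    have h2 : 2 * m / c < b := by rw [hb]; linarith [le_max_right (1:ℝ) (2 * m / c)]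
    rw [div_lt_iff₀ hcpos] at h2
    nlinarith
  have hab : a < b := by
    have h3 : a ≤ 1 / 2 := by rw [ha]; linarith [min_le_left (1:ℝ) (k * m)]
    linarith
  have hcont : ContinuousOn (F k) (Icc a b) := by
    intro x hx
    exact (hasDerivAt_F hk (lt_of_lt_of_le ha0 hx.1)).continuousAt.continuousWithinAt
  have hm_mem : m ∈ Ioo (F k a) (F k b) := ⟨haF, hbF⟩
  obtain ⟨φ, hφmem, hφF⟩ := intermediate_value_Ioo hab.le hcont hm_mem
  refine ⟨φ, ⟨lt_trans ha0 hφmem.1, hφF⟩, ?_⟩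
  intro ψ hψ
  exact (strictMonoOn_F hk).injOn hψ.1 (lt_trans ha0 hφmem.1 : (0:ℝ) < φ)
    (hψ.2.trans hφF.symm)

noncomputable def Ic (k u : ℝ) : ℝ :=
  if u ≤ 0 then 0 else u ^ (k - 1) * (1 - u) ^ (-(k + 2)) * Real.exp (-k / u)

lemma tendsto_Ic_zero {k : ℝ} (hk : 0 < k) : Tendsto (Ic k) (𝓝[>] (0:ℝ)) (𝓝 0) := by
  have h2 : Tendsto (fun u : ℝ => (1 - u) ^ (-(k + 2))) (𝓝[>] (0:ℝ))
      (𝓝 ((1 - 0) ^ (-(k + 2)))) := by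
    apply Tendsto.mono_left _ nhdsWithin_le_nhds
    apply ContinuousAt.tendsto
    exact (Real.continuousAt_rpow_const _ _ (Or.inl (by norm_num))).comp
      (continuous_const.sub continuous_id).continuousAt
  have h := (tendstoA hk).mul h2
  rw [zero_mul] at h
  refine h.congr' ?_
  filter_upwards [self_mem_nhdsWithin] with u (hu : (0:ℝ) < u)
  rw [Ic, if_neg (not_le.2 hu), neg_div]
  ring

lemma continuousOn_Ic {k c : ℝ} (hk : 0 < k) (hc : c < 1) :
    ContinuousOn (Ic k) (Icc 0 c) := by
  intro x hx
  rcases eq_or_lt_of_le hx.1 with h | h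
  · have h0 : Ic k 0 = 0 := by simp [Ic]
    subst h
    have h1 : ContinuousWithinAt (Ic k) (Ioi 0) 0 := by
      unfold ContinuousWithinAt
      rw [h0]
      exact tendsto_Ic_zero hk
    exact (continuousWithinAt_Ioi_iff_Ici.1 h1).mono (fun y hy => hy.1)
  · have hx1 : x < 1 := lt_of_le_of_lt hx.2 hc
    have hca : ContinuousAt (fun u : ℝ => u ^ (k - 1) * (1 - u) ^ (-(k + 2)) *
        Real.exp (-k / u)) x := by
      have h1 : ContinuousAt (fun u : ℝ => u ^ (k - 1)) x :=
        Real.continuousAt_rpow_const _ _ (Or.inl h.ne')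
      have h2 : ContinuousAt (fun u : ℝ => (1 - u) ^ (-(k + 2))) x :=
        (Real.continuousAt_rpow_const _ _ (Or.inl (by linarith))).comp
          (continuous_const.sub continuous_id).continuousAt
      have h3 : ContinuousAt (fun u : ℝ => Real.exp (-k / u)) x :=
        Real.continuous_exp.continuousAt.comp (continuousAt_const.div continuousAt_id h.ne')
      exact (h1.mul h2).mul h3
    apply ContinuousAt.continuousWithinAt
    refine hca.congr_of_eventuallyEq ?_
    filter_upwards [Ioi_mem_nhds h] with u (hu : 0 < u)
    simp [Ic, not_le.2 hu]

lemma subst_integral {k φ : ℝ} (hk : 0 < k) (hφ : 0 < φ) :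
    (∫ u in (0:ℝ)..(φ / (1 + φ)), Ic k u) = G k φ := by
  have h1φ : (0:ℝ) < 1 + φ := by linarith
  have hfd : ∀ t ∈ uIcc (0:ℝ) φ,
      HasDerivAt (fun t : ℝ => t / (1 + t)) (((1+t)^2)⁻¹) t := by
    intro t ht
    rw [uIcc_of_le hφ.le] at ht
    have h1t : (0:ℝ) < 1 + t := by linarith [ht.1]
    have h := (hasDerivAt_id t).div ((hasDerivAt_id t).const_add 1) h1t.ne'
    refine h.congr_deriv ?_
    simp only [id]
    ring
  have hcont' : ContinuousOn (fun t : ℝ => ((1+t)^2)⁻¹) (uIcc (0:ℝ) φ) := by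
    intro t ht
    rw [uIcc_of_le hφ.le] at ht
    have h1t : (0:ℝ) < 1 + t := by linarith [ht.1]
    exact (((continuous_const.add continuous_id).pow 2).continuousAt.inv₀
      (by simp only [Pi.pow_apply, Pi.add_apply, id]; positivity)).continuousWithinAt
  have himg : (fun t : ℝ => t / (1 + t)) '' (uIcc (0:ℝ) φ) ⊆ Icc 0 (φ / (1 + φ)) := by
    rw [uIcc_of_le hφ.le]
    rintro _ ⟨t, ht, rfl⟩
    have h1t : (0:ℝ) < 1 + t := by linarith [ht.1]
    refine ⟨div_nonneg ht.1 h1t.le, ?_⟩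
    rw [div_le_div_iff₀ h1t h1φ]
    nlinarith [ht.2]
  have hIcCont : ContinuousOn (Ic k) ((fun t : ℝ => t / (1 + t)) '' (uIcc (0:ℝ) φ)) :=
    (continuousOn_Ic hk (by rw [div_lt_one h1φ]; linarith)).mono himg
  have hsub := intervalIntegral.integral_comp_smul_deriv' hfd hcont' hIcCont
  rw [zero_div] at hsub
  rw [← hsub, G]
  apply intervalIntegral.integral_congr
  intro t ht
  rw [uIcc_of_le hφ.le] at ht
  rcases eq_or_lt_of_le ht.1 with h0 | h0
  · rw [← h0]
    norm_num [Ic, W]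
  · have h1t : (0:ℝ) < 1 + t := by linarith
    have hs : 0 < t / (1 + t) := div_pos h0 h1t
    simp only [Function.comp, smul_eq_mul]
    rw [Ic, if_neg (not_le.2 hs), W, if_neg (not_le.2 h0)]
    have e1 : (1 : ℝ) - t / (1 + t) = (1 + t)⁻¹ := by field_simp; ring
    have e2 : -k / (t / (1 + t)) = -(k * (1 + t) / t) := by
      rw [div_div_eq_mul_div]
      ring
    have e3 : (t / (1 + t)) ^ (k - 1) = t ^ (k - 1) / (1 + t) ^ (k - 1) :=
      Real.div_rpow h0.le h1t.le _
    have e4 : ((1 + t : ℝ)⁻¹) ^ (-(k + 2)) = (1 + t) ^ (k + 2) := by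
      rw [Real.inv_rpow h1t.le, ← Real.rpow_neg h1t.le, neg_neg]
    rw [e1, e2, e3, e4]
    have hP : (1 + t : ℝ) ^ (k + 2) = (1 + t) ^ (k - 1) * ((1 + t) ^ 2 * (1 + t)) := by
      rw [show k + 2 = (k - 1) + ((2:ℕ):ℝ) + (1:ℝ) by push_cast; ring,
        Real.rpow_add h1t, Real.rpow_add h1t, Real.rpow_natCast, Real.rpow_one]
      ring
    rw [hP]
    have hPne : (1 + t : ℝ) ^ (k - 1) ≠ 0 := (Real.rpow_pos_of_pos h1t _).ne'
    field_simp

end Stmt3Aux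

open Stmt3Aux in
/-- existence and uniqueness of `φ* ∈ (λ/c, ∞)` solving the
transcendental equation; in fact the equation has exactly one solution on
`(0,∞)` and it lies in `(λ/c, ∞)`. -/
theorem stmt3 (lam μ c : ℝ) (hlam : 0 < lam) (hμ : μ ≠ 0) (hc : 0 < c)
    (κ : ℝ) (hκ : κ = 2 * lam / μ ^ 2)
    (E : ℝ → Prop)
    (hE : ∀ φ : ℝ, E φ ↔
      Real.exp (κ * (1 + φ) / φ) / φ ^ κ *
        ∫ u in (0:ℝ)..(φ / (1 + φ)),
          u ^ (κ - 1) * (1 - u) ^ (-(κ + 2)) * Real.exp (-κ / u)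
      = μ ^ 2 / (2 * c)) :
    (∃! φ : ℝ, 0 < φ ∧ E φ) ∧ (∀ φ : ℝ, 0 < φ → E φ → lam / c < φ) := by
  have hμ2 : (0:ℝ) < μ ^ 2 := by positivity
  have hk : 0 < κ := by rw [hκ]; positivity
  have hm : 0 < μ ^ 2 / (2 * c) := by positivity
  obtain ⟨hex, hbd⟩ := main_aux κ (μ ^ 2 / (2 * c)) hk hm
  have hbridge : ∀ φ : ℝ, 0 < φ → (E φ ↔ F κ φ = μ ^ 2 / (2 * c)) := by
    intro φ hφ
    rw [hE φ]
    have h1φ : (0:ℝ) < 1 + φ := by linarith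
    have hint : (∫ u in (0:ℝ)..(φ / (1 + φ)),
        u ^ (κ - 1) * (1 - u) ^ (-(κ + 2)) * Real.exp (-κ / u)) = G κ φ := by
      rw [← subst_integral hk hφ]
      apply intervalIntegral.integral_congr_ae
      apply MeasureTheory.ae_of_all
      intro u hu
      rw [uIoc_of_le (by positivity : (0:ℝ) ≤ φ / (1 + φ))] at hu
      rw [Ic, if_neg (not_le.2 hu.1)]
    have hg : Real.exp (κ * (1 + φ) / φ) / φ ^ κ = (g κ φ)⁻¹ := by
      rw [g, mul_inv, ← Real.exp_neg, neg_neg]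
      ring
    rw [hint, hg]
    unfold F
    rw [inv_mul_eq_div]
  have hkm : κ * (μ ^ 2 / (2 * c)) = lam / c := by
    rw [hκ]
    field_simp
  obtain ⟨φ₀, ⟨hφ0, hF0⟩, huniq⟩ := hex
  refine ⟨⟨φ₀, ⟨hφ0, (hbridge φ₀ hφ0).2 hF0⟩, ?_⟩, ?_⟩
  · rintro ψ ⟨hψ0, hψE⟩
    exact huniq ψ ⟨hψ0, (hbridge ψ hψ0).1 hψE⟩
  · intro φ hφ hEφ
    have h := hbd φ hφ ((hbridge φ hφ).1 hEφ)
    rw [hkm] at h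
    exact h
end

section
/- With F(φ) = ∫₀^{φ/(1+φ)} (1/(u(1−u)²)) e^{κ(log(u/(1−u)) − 1/u)} du and G(φ) = (μ²/(2c)) e^{κ(log φ − (1+φ)/φ)}, for every φ ∈ (0,∞) one has F'(φ) < G'(φ) if and only if φ < λ/c, and F'(φ) > G'(φ) if and only if φ > λ/c. -/
open Real Set intervalIntegral MeasureTheory

/-- comparison of the derivatives of `F` and `G`:
`F'(φ) < G'(φ) ↔ φ < λ/c` and `F'(φ) > G'(φ) ↔ φ > λ/c` for `φ ∈ (0,∞)`. -/
theorem stmt4 (lam μ c : ℝ) (hlam : 0 < lam) (hμ : μ ≠ 0) (hc : 0 < c)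
    (κ : ℝ) (hκ : κ = 2 * lam / μ ^ 2)
    (F G : ℝ → ℝ)
    (hF : ∀ φ : ℝ, F φ =
      ∫ u in (0:ℝ)..(φ / (1 + φ)),
        (1 / (u * (1 - u) ^ 2)) * Real.exp (κ * (Real.log (u / (1 - u)) - 1 / u)))
    (hG : ∀ φ : ℝ, G φ =
      μ ^ 2 / (2 * c) * Real.exp (κ * (Real.log φ - (1 + φ) / φ))) :
    ∀ φ ∈ Set.Ioi (0:ℝ),
      (deriv F φ < deriv G φ ↔ φ < lam / c) ∧
      (deriv F φ > deriv G φ ↔ φ > lam / c) := by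
  intro φ hφ
  simp only [Set.mem_Ioi] at hφ
  have hμ2 : (0:ℝ) < μ ^ 2 := by positivity
  have hκpos : 0 < κ := by rw [hκ]; positivity
  have h1φ : (0:ℝ) < 1 + φ := by linarith
  set f : ℝ → ℝ := fun u =>
    (1 / (u * (1 - u) ^ 2)) * Real.exp (κ * (Real.log (u / (1 - u)) - 1 / u)) with hf_def
  set b : ℝ := φ / (1 + φ) with hb_def
  have hb0 : 0 < b := div_pos hφ h1φ
  have hb1 : b < 1 := by
    rw [hb_def, div_lt_one h1φ]; linarith
  have h1b : 0 < 1 - b := by linarith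
  -- measurability
  have hmeas : Measurable f := by
    apply Measurable.mul
    · exact (measurable_const.div ((measurable_id.mul
        ((measurable_const.sub measurable_id).pow_const 2))))
    · exact (Real.measurable_exp.comp (measurable_const.mul
        ((Real.measurable_log.comp (measurable_id.div (measurable_const.sub measurable_id))).sub
          (measurable_const.div measurable_id))))
  -- bound on (0, b]
  have hbound : ∀ u ∈ Set.Ioc (0:ℝ) b,
      ‖f u‖ ≤ Real.exp (κ * Real.log (b / (1 - b))) * (1 / (1 - b) ^ 2) * (1 / κ) := by
    intro u hu
    obtain ⟨hu0, hub⟩ := hu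
    have h1u : 0 < 1 - u := by linarith
    have hsplit : Real.exp (κ * (Real.log (u / (1 - u)) - 1 / u)) =
        Real.exp (κ * Real.log (u / (1 - u))) * Real.exp (-(κ * (1 / u))) := by
      rw [← Real.exp_add]; congr 1; ring
    have hfu : f u = Real.exp (κ * Real.log (u / (1 - u))) * (1 / (1 - u) ^ 2) *
        ((1 / u) * Real.exp (-(κ * (1 / u)))) := by
      rw [hf_def]
      simp only
      rw [hsplit, show (1:ℝ) / (u * (1 - u) ^ 2) = (1 / u) * (1 / (1 - u) ^ 2) from by
        rw [one_div, one_div, one_div, mul_inv]]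
      ring
    have hA1 : Real.exp (κ * Real.log (u / (1 - u))) ≤ Real.exp (κ * Real.log (b / (1 - b))) := by
      apply Real.exp_le_exp.2
      apply mul_le_mul_of_nonneg_left _ hκpos.le
      apply Real.log_le_log (by positivity)
      rw [div_le_div_iff₀ h1u h1b]; nlinarith
    have hA2 : (1:ℝ) / (1 - u) ^ 2 ≤ 1 / (1 - b) ^ 2 := by
      apply one_div_le_one_div_of_le (by positivity)
      nlinarith
    have hA3 : (1 / u) * Real.exp (-(κ * (1 / u))) ≤ 1 / κ := by
      have hx : 0 < κ * (1 / u) := by positivity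
      have := Real.add_one_le_exp (κ * (1 / u))
      have hle : κ * (1 / u) ≤ Real.exp (κ * (1 / u)) := by linarith
      have hexp : Real.exp (-(κ * (1 / u))) ≤ 1 / (κ * (1 / u)) := by
        rw [Real.exp_neg]
        exact (inv_anti₀ hx hle).trans_eq (one_div _).symm
      calc (1 / u) * Real.exp (-(κ * (1 / u))) ≤ (1 / u) * (1 / (κ * (1 / u))) := by
            apply mul_le_mul_of_nonneg_left hexp (by positivity)
        _ = 1 / κ := by field_simp
    have hnn : 0 ≤ f u := by
      rw [hf_def]; positivity
    rw [Real.norm_eq_abs, abs_of_nonneg hnn, hfu]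
    apply mul_le_mul (mul_le_mul hA1 hA2 (by positivity) (Real.exp_pos _).le) hA3
      (by positivity) (by positivity)
  -- integrability on [0, b]
  have hint : IntervalIntegrable f volume 0 b := by
    rw [intervalIntegrable_iff, Set.uIoc_of_le hb0.le]
    apply Measure.integrableOn_of_bounded (measure_Ioc_lt_top).ne
      hmeas.aestronglyMeasurable
    exact (MeasureTheory.ae_restrict_iff' measurableSet_Ioc).2 (Filter.Eventually.of_forall hbound)
  -- continuity at b
  have hcont : ContinuousAt f b := by
    have hne : b * (1 - b) ^ 2 ≠ 0 := mul_ne_zero hb0.ne' (pow_ne_zero 2 h1b.ne')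
    have hne2 : b / (1 - b) ≠ 0 := div_ne_zero hb0.ne' h1b.ne'
    have hdiv : ContinuousAt (fun u : ℝ => u / (1 - u)) b :=
      ContinuousAt.div continuousAt_id (continuousAt_const.sub continuousAt_id) h1b.ne'
    have hlogc : ContinuousAt (fun u : ℝ => Real.log (u / (1 - u))) b :=
      hdiv.log hne2
    have hinvc : ContinuousAt (fun u : ℝ => 1 / u) b :=
      continuousAt_const.div continuousAt_id hb0.ne'
    have hden : ContinuousAt (fun u : ℝ => u * (1 - u) ^ 2) b := by fun_prop
    exact (continuousAt_const.div hden hne).mul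
      (Real.continuous_exp.continuousAt.comp ((hlogc.sub hinvc).const_mul κ))
  -- FTC
  have hFTC : HasDerivAt (fun x => ∫ u in (0:ℝ)..x, f u) (f b) b :=
    intervalIntegral.integral_hasDerivAt_right hint
      hmeas.stronglyMeasurable.stronglyMeasurableAtFilter hcont
  have hg : HasDerivAt (fun x : ℝ => x / (1 + x)) (1 / (1 + φ) ^ 2) φ := by
    have := (hasDerivAt_id φ).div ((hasDerivAt_id φ).const_add 1) h1φ.ne'
    refine this.congr_deriv ?_
    simp only [id]; field_simp; ring
  have hFd : HasDerivAt F (f b * (1 / (1 + φ) ^ 2)) φ := by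
    have : F = fun x => ∫ u in (0:ℝ)..(x / (1 + x)), f u := funext fun x => hF x
    rw [this]
    exact hFTC.comp φ hg
  -- derivative of G
  set E : ℝ := Real.exp (κ * (Real.log φ - (1 + φ) / φ)) with hE_def
  have hEpos : 0 < E := Real.exp_pos _
  have hq : HasDerivAt (fun x : ℝ => (1 + x) / x) (-(1 / φ ^ 2)) φ := by
    have := ((hasDerivAt_id φ).const_add 1).div (hasDerivAt_id φ) hφ.ne'
    refine this.congr_deriv ?_
    simp only [id]; field_simp; ring
  have hinner : HasDerivAt (fun x : ℝ => κ * (Real.log x - (1 + x) / x))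
      (κ * (1 / φ + 1 / φ ^ 2)) φ := by
    have := ((Real.hasDerivAt_log hφ.ne').sub hq).const_mul κ
    refine this.congr_deriv ?_
    rw [inv_eq_one_div]; ring
  have hGd : HasDerivAt G (μ ^ 2 / (2 * c) * (E * (κ * (1 / φ + 1 / φ ^ 2)))) φ := by
    have : G = fun x => μ ^ 2 / (2 * c) * Real.exp (κ * (Real.log x - (1 + x) / x)) :=
      funext fun x => hG x
    rw [this]
    exact (hinner.exp).const_mul _
  -- compute the values
  set P : ℝ := (1 + φ) * E / φ ^ 2 with hP_def
  have hPpos : 0 < P := div_pos (mul_pos h1φ hEpos) (pow_pos hφ 2)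
  have h1b' : 1 - b = 1 / (1 + φ) := by rw [hb_def]; field_simp; ring
  have hb1b : b / (1 - b) = φ := by
    rw [h1b', hb_def]
    rw [div_div_div_cancel_right₀]
    · simp
    · exact h1φ.ne'
  have hFval : f b * (1 / (1 + φ) ^ 2) = φ * P := by
    rw [hf_def]
    simp only
    rw [hb1b, h1b']
    have h1b2 : (1:ℝ) / b = (1 + φ) / φ := by
      rw [hb_def]; rw [one_div_div]
    rw [h1b2, hP_def, hE_def, hb_def]
    field_simp
  have hGval : μ ^ 2 / (2 * c) * (E * (κ * (1 / φ + 1 / φ ^ 2))) = (lam / c) * P := by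
    rw [hκ, hP_def]
    field_simp
    ring
  have hF' : deriv F φ = φ * P := by rw [hFd.deriv, hFval]
  have hG' : deriv G φ = (lam / c) * P := by rw [hGd.deriv, hGval]
  rw [hF', hG']
  exact ⟨mul_lt_mul_iff_left₀ hPpos, mul_lt_mul_iff_left₀ hPpos⟩
end

section
/- With F and G as defined, lim_{φ→∞} F(φ)/G(φ) = ∞; in particular the ratio F'(φ)/G'(φ) = (c/λ)·φ for all φ ∈ (0,∞), which tends to ∞ as φ → ∞. -/
open Real Set Filter intervalIntegral Topology

noncomputable def stmt5f (κ u : ℝ) : ℝ :=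
  (1 / (u * (1 - u) ^ 2)) * Real.exp (κ * (Real.log (u / (1 - u)) - 1 / u))

lemma stmt5f_zero (κ : ℝ) : stmt5f κ 0 = 0 := by
  simp [stmt5f]

lemma stmt5f_tendsto {κ : ℝ} (hκ : 0 < κ) :
    Tendsto (stmt5f κ) (𝓝[>] (0:ℝ)) (𝓝 0) := by
  have hg : Tendsto (fun u : ℝ => 4 * 2 ^ κ * ((u⁻¹) ^ (1 - κ) * Real.exp (-κ * u⁻¹)))
      (𝓝[>] (0:ℝ)) (𝓝 0) := by
    have h1 : Tendsto (fun t : ℝ => t ^ (1 - κ) * Real.exp (-κ * t)) atTop (𝓝 0) :=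
      tendsto_rpow_mul_exp_neg_mul_atTop_nhds_zero (1 - κ) κ hκ
    have h2 := (h1.comp tendsto_inv_nhdsGT_zero).const_mul (4 * 2 ^ κ)
    simpa [Function.comp] using h2
  have hIoo : Ioo (0:ℝ) (1/2) ∈ 𝓝[>] (0:ℝ) :=
    Ioo_mem_nhdsGT_of_mem ⟨le_refl 0, by norm_num⟩
  apply squeeze_zero' ?_ ?_ hg
  · filter_upwards [hIoo] with u hu
    have hu0 : 0 < u := hu.1
    have h1u : 0 < 1 - u := by have := hu.2; linarith
    have h2 : 0 ≤ u * (1 - u) ^ 2 := by positivity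
    exact mul_nonneg (by positivity) (Real.exp_pos _).le
  · filter_upwards [hIoo] with u hu
    have hu0 : 0 < u := hu.1
    have hu2 : u < 1/2 := hu.2
    have h1u : 0 < 1 - u := by linarith
    have hq : 0 < u / (1 - u) := div_pos hu0 h1u
    have hexp : Real.exp (κ * (Real.log (u / (1 - u)) - 1 / u)) =
        (u / (1 - u)) ^ κ * Real.exp (-κ * u⁻¹) := by
      rw [Real.rpow_def_of_pos hq, ← Real.exp_add]
      congr 1
      rw [one_div]
      ring
    have hb1 : (u / (1 - u)) ^ κ ≤ (2 * u) ^ κ := by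
      apply Real.rpow_le_rpow hq.le _ hκ.le
      rw [div_le_iff₀ h1u]
      nlinarith
    have hb2 : 1 / (u * (1 - u) ^ 2) ≤ 4 / u := by
      rw [div_le_div_iff₀ (by positivity) hu0]
      nlinarith [mul_nonneg (mul_nonneg hu0.le (by linarith : (0:ℝ) ≤ 1 - 2*u)) (by linarith : (0:ℝ) ≤ 3 - 2*u)]
    have hru : (u⁻¹) ^ (1 - κ) = u ^ (κ - 1) := by
      rw [Real.inv_rpow hu0.le, ← Real.rpow_neg hu0.le, neg_sub]
    calc stmt5f κ u
        = (1 / (u * (1 - u) ^ 2)) * ((u / (1 - u)) ^ κ * Real.exp (-κ * u⁻¹)) := by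
          rw [stmt5f, hexp]
      _ ≤ (4 / u) * ((2 * u) ^ κ * Real.exp (-κ * u⁻¹)) := by
          apply mul_le_mul hb2 (mul_le_mul_of_nonneg_right hb1 (Real.exp_pos _).le)
            (by positivity) (by positivity)
      _ = 4 * 2 ^ κ * ((u⁻¹) ^ (1 - κ) * Real.exp (-κ * u⁻¹)) := by
          rw [hru, Real.mul_rpow (by norm_num) hu0.le, Real.rpow_sub_one (ne_of_gt hu0)]
          field_simp

lemma stmt5f_continuousAt {κ x : ℝ} (hx0 : 0 < x) (hx1 : x < 1) :
    ContinuousAt (stmt5f κ) x := by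
  have h1 : x ≠ 0 := ne_of_gt hx0
  have h1u : (0:ℝ) < 1 - x := by linarith
  have h2 : (1:ℝ) - x ≠ 0 := ne_of_gt h1u
  have h3 : x / (1 - x) ≠ 0 := div_ne_zero h1 h2
  have hden : ContinuousAt (fun u : ℝ => u * (1 - u) ^ 2) x := by fun_prop
  have hdenne : x * (1 - x) ^ 2 ≠ 0 := by positivity
  apply ContinuousAt.mul
  · exact continuousAt_const.div hden hdenne
  · apply Real.continuous_exp.continuousAt.comp
    apply continuousAt_const.mul
    apply ContinuousAt.sub
    · have hd : ContinuousAt (fun u : ℝ => u / (1 - u)) x :=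
        continuousAt_id.div (by fun_prop) h2
      exact hd.log h3
    · exact continuousAt_const.div continuousAt_id h1

lemma stmt5f_continuousOn {κ : ℝ} (hκ : 0 < κ) {p : ℝ} (hp1 : p < 1) :
    ContinuousOn (stmt5f κ) (Icc 0 p) := by
  intro x hx
  rcases eq_or_lt_of_le hx.1 with h | h
  · subst h
    have key : Tendsto (stmt5f κ) (𝓝[Ici (0:ℝ)] 0) (𝓝 0) := by
      rw [← Set.Ioi_insert, nhdsWithin_insert]
      apply Tendsto.sup
      · simpa [stmt5f_zero] using tendsto_pure_nhds (stmt5f κ) 0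
      · exact stmt5f_tendsto hκ
    have : Tendsto (stmt5f κ) (𝓝[Icc 0 p] 0) (𝓝 0) :=
      key.mono_left (nhdsWithin_mono 0 Icc_subset_Ici_self)
    simpa [ContinuousWithinAt, stmt5f_zero] using this
  · exact (stmt5f_continuousAt h (lt_of_le_of_lt hx.2 hp1)).continuousWithinAt

lemma stmt5_s_hasDerivAt {φ : ℝ} (hφ : 0 < φ) :
    HasDerivAt (fun x : ℝ => x / (1 + x)) (1 / (1 + φ) ^ 2) φ := by
  have h1 : (1:ℝ) + φ ≠ 0 := by positivity
  have := (hasDerivAt_id φ).div ((hasDerivAt_id φ).const_add 1) h1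
  refine this.congr_deriv ?_
  simp

lemma stmt5F_hasDerivAt {κ : ℝ} (hκ : 0 < κ) {φ : ℝ} (hφ : 0 < φ) :
    HasDerivAt (fun x : ℝ => ∫ u in (0:ℝ)..(x / (1 + x)), stmt5f κ u)
      ((1 + φ) / φ * Real.exp (κ * (Real.log φ - (1 + φ) / φ))) φ := by
  have h1φ : (0:ℝ) < 1 + φ := by linarith
  have hp0 : 0 < φ / (1 + φ) := div_pos hφ h1φ
  have hp1 : φ / (1 + φ) < 1 := by rw [div_lt_one h1φ]; linarith
  have hint : IntervalIntegrable (stmt5f κ) MeasureTheory.volume 0 (φ / (1 + φ)) :=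
    (stmt5f_continuousOn hκ hp1).intervalIntegrable_of_Icc hp0.le
  have hmeas : StronglyMeasurableAtFilter (stmt5f κ) (𝓝 (φ / (1 + φ)))
      MeasureTheory.volume := by
    apply ContinuousOn.stronglyMeasurableAtFilter (isOpen_Ioo (a := (0:ℝ)) (b := 1))
      (fun y hy => (stmt5f_continuousAt hy.1 hy.2).continuousWithinAt)
    exact ⟨hp0, hp1⟩
  have hca : ContinuousAt (stmt5f κ) (φ / (1 + φ)) := stmt5f_continuousAt hp0 hp1
  have hI := intervalIntegral.integral_hasDerivAt_right hint hmeas hca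
  have hchain := HasDerivAt.comp (x := φ) hI (stmt5_s_hasDerivAt hφ)
  refine hchain.congr_deriv ?_
  have e1 : 1 - φ / (1 + φ) = 1 / (1 + φ) := by field_simp; ring
  have e2 : φ / (1 + φ) / (1 / (1 + φ)) = φ := by field_simp
  have e3 : 1 / (φ / (1 + φ)) = (1 + φ) / φ := one_div_div _ _
  rw [stmt5f, e1, e2, e3]
  have h1 : (1:ℝ) + φ ≠ 0 := ne_of_gt h1φ
  field_simp

lemma stmt5G_hasDerivAt {κ C : ℝ} {φ : ℝ} (hφ : 0 < φ) :
    HasDerivAt (fun x : ℝ => C * Real.exp (κ * (Real.log x - (1 + x) / x)))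
      (C * κ * ((φ + 1) / φ ^ 2) * Real.exp (κ * (Real.log φ - (1 + φ) / φ))) φ := by
  have hφ' : φ ≠ 0 := ne_of_gt hφ
  have hlog : HasDerivAt Real.log φ⁻¹ φ := Real.hasDerivAt_log hφ'
  have hdiv : HasDerivAt (fun x : ℝ => (1 + x) / x) ((1 * φ - (1 + φ) * 1) / φ ^ 2) φ :=
    ((hasDerivAt_id φ).const_add 1).div (hasDerivAt_id φ) hφ'
  have hinner := (hlog.sub hdiv).const_mul κ
  have hfinal := (hinner.exp).const_mul C
  refine hfinal.congr_deriv ?_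
  simp only [Pi.sub_apply]
  field_simp
  ring

/-- `F(φ)/G(φ) → ∞` as `φ → ∞`; in particular the ratio of the
derivatives satisfies `F'(φ)/G'(φ) = (c/λ)·φ` for all `φ ∈ (0,∞)`, which tends
to `∞` as `φ → ∞`. -/
theorem stmt5 (lam μ c : ℝ) (hlam : 0 < lam) (hμ : μ ≠ 0) (hc : 0 < c)
    (κ : ℝ) (hκ : κ = 2 * lam / μ ^ 2)
    (F G : ℝ → ℝ)
    (hF : ∀ φ : ℝ, F φ =
      ∫ u in (0:ℝ)..(φ / (1 + φ)),
        (1 / (u * (1 - u) ^ 2)) * Real.exp (κ * (Real.log (u / (1 - u)) - 1 / u)))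
    (hG : ∀ φ : ℝ, G φ =
      μ ^ 2 / (2 * c) * Real.exp (κ * (Real.log φ - (1 + φ) / φ))) :
    Filter.Tendsto (fun φ => F φ / G φ) Filter.atTop Filter.atTop ∧
    (∀ φ ∈ Set.Ioi (0:ℝ), deriv F φ / deriv G φ = (c / lam) * φ) ∧
    Filter.Tendsto (fun φ => deriv F φ / deriv G φ) Filter.atTop Filter.atTop := by
  have hμ2 : 0 < μ ^ 2 := lt_of_le_of_ne (sq_nonneg μ) (Ne.symm (pow_ne_zero 2 hμ))
  have hκpos : 0 < κ := by rw [hκ]; positivity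
  set E : ℝ → ℝ := fun φ => Real.exp (κ * (Real.log φ - (1 + φ) / φ)) with hE
  have hEpos : ∀ φ, 0 < E φ := fun φ => Real.exp_pos _
  -- rewrite F, G as the auxiliary functions
  have hFeq : F = fun x : ℝ => ∫ u in (0:ℝ)..(x / (1 + x)), stmt5f κ u := by
    funext x; rw [hF x]; rfl
  have hGeq : G = fun x : ℝ => μ ^ 2 / (2 * c) * Real.exp (κ * (Real.log x - (1 + x) / x)) :=
    funext hG
  have hFd : ∀ φ : ℝ, 0 < φ → HasDerivAt F ((1 + φ) / φ * E φ) φ := by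
    intro φ hφ
    rw [hFeq]
    exact stmt5F_hasDerivAt hκpos hφ
  have hGd : ∀ φ : ℝ, 0 < φ → HasDerivAt G (lam / c * ((φ + 1) / φ ^ 2) * E φ) φ := by
    intro φ hφ
    rw [hGeq]
    have h := stmt5G_hasDerivAt (κ := κ) (C := μ ^ 2 / (2 * c)) hφ
    convert h using 2
    rw [hκ]
    field_simp
  have hGpos : ∀ φ, 0 < G φ := by
    intro φ; rw [hG φ]; positivity
  -- G tends to infinity
  have hGtop : Tendsto G atTop atTop := by
    have hexp : Tendsto (fun φ : ℝ => κ * (Real.log φ - (1 + φ) / φ)) atTop atTop := by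
      apply tendsto_atTop_mono' atTop ?_
        (tendsto_atTop_add_const_right _ (-(2 * κ)) (tendsto_log_atTop.const_mul_atTop hκpos))
      filter_upwards [eventually_ge_atTop (1:ℝ)] with x hx
      have hx0 : (0:ℝ) < x := lt_of_lt_of_le one_pos hx
      have h2 : (1 + x) / x ≤ 2 := by rw [div_le_iff₀ hx0]; linarith
      nlinarith [hκpos.le]
    have h1 : Tendsto (fun φ : ℝ => μ ^ 2 / (2 * c) * Real.exp (κ * (Real.log φ - (1 + φ) / φ)))
        atTop atTop :=
      (Real.tendsto_exp_atTop.comp hexp).const_mul_atTop (by positivity)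
    rw [hGeq]; exact h1
  -- ratio of derivatives
  have hderiv_ratio : ∀ φ : ℝ, 0 < φ → deriv F φ / deriv G φ = (c / lam) * φ := by
    intro φ hφ
    rw [(hFd φ hφ).deriv, (hGd φ hφ).deriv]
    have hEne : E φ ≠ 0 := (hEpos φ).ne'
    field_simp
    ring
  refine ⟨?_, fun φ hφ => hderiv_ratio φ hφ, ?_⟩
  · -- F/G → ∞
    rw [tendsto_atTop]
    intro b
    set M : ℝ := b + 1 with hM
    set a : ℝ := max 1 (lam * M / c) with ha
    have ha1 : (1:ℝ) ≤ a := le_max_left _ _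
    have ha0 : (0:ℝ) < a := lt_of_lt_of_le one_pos ha1
    have hmono : MonotoneOn (fun x => F x - M * G x) (Ici a) := by
      apply monotoneOn_of_deriv_nonneg (convex_Ici a)
      · intro x hx
        have hx0 : 0 < x := lt_of_lt_of_le ha0 hx
        exact ((hFd x hx0).sub ((hGd x hx0).const_mul M)).continuousAt.continuousWithinAt
      · intro x hx
        rw [interior_Ici] at hx
        have hx0 : 0 < x := lt_trans ha0 hx
        exact ((hFd x hx0).sub ((hGd x hx0).const_mul M)).differentiableAt.differentiableWithinAt
      · intro x hx
        rw [interior_Ici] at hx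
        have hx0 : 0 < x := lt_trans ha0 hx
        change 0 ≤ deriv (F - fun y => M * G y) x
        rw [((hFd x hx0).sub ((hGd x hx0).const_mul M)).deriv]
        have hxM : lam * M / c ≤ x := le_of_lt (lt_of_le_of_lt (le_max_right _ _) hx)
        have hxM' : lam * M ≤ c * x := by
          rw [div_le_iff₀ hc] at hxM; linarith
        have factor : (1 + x) / x * E x - M * (lam / c * ((x + 1) / x ^ 2) * E x) =
            (x + 1) / x ^ 2 * E x / c * (c * x - lam * M) := by
          field_simp
          ring
        rw [factor]
        have h1 : 0 ≤ (x + 1) / x ^ 2 * E x / c := by positivity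
        exact mul_nonneg h1 (by linarith)
    have hK : Tendsto (fun x => (F a - M * G a) / G x) atTop (𝓝 0) :=
      Tendsto.div_atTop tendsto_const_nhds hGtop
    filter_upwards [eventually_ge_atTop a,
      hK.eventually (eventually_ge_nhds (by norm_num : (-1:ℝ) < 0))] with x hxa hxK
    have hGx : 0 < G x := hGpos x
    have hsub : F a - M * G a ≤ F x - M * G x :=
      hmono (self_mem_Ici) hxa hxa
    have h1 : (F a - M * G a) / G x ≤ (F x - M * G x) / G x :=
      (div_le_div_iff_of_pos_right hGx).mpr hsub
    have h2 : (F x - M * G x) / G x = F x / G x - M := by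
      rw [sub_div, mul_div_assoc, div_self hGx.ne', mul_one]
    rw [h2] at h1
    linarith
  · -- deriv ratio → ∞
    have h1 : Tendsto (fun φ : ℝ => c / lam * φ) atTop atTop :=
      tendsto_id.const_mul_atTop (by positivity)
    apply h1.congr'
    filter_upwards [eventually_gt_atTop (0:ℝ)] with x hx
    exact (hderiv_ratio x hx).symm
end

section
/- Define V̂(φ) = −(φ* − φ)/(c(1+φ*)) − (2/μ²)(1+φ) ∫_{φ*/(1+φ*)}^{φ/(1+φ)} ((1−v)/v)^κ e^{κ/v} ∫₀^v u^{κ−1}/(1−u)^{κ+2} e^{−κ/u} du dv for φ ∈ [0,φ*]. Then V̂(φ*) = 0, and V̂'(φ*) = 0 if and only if φ* satisfies (e^{κ(1+φ*)/φ*}/φ*^κ) ∫₀^{φ*/(1+φ*)} u^{κ−1}/(1−u)^{κ+2} e^{−κ/u} du = μ²/(2c). -/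
open Real Set intervalIntegral MeasureTheory

lemma fAux_intInt {κ : ℝ} (hκ : 0 < κ) {b : ℝ} (hb0 : 0 < b) (hb1 : b < 1) :
    IntervalIntegrable (fun u : ℝ => u ^ (κ - 1) * (1 - u) ^ (-(κ + 2)) * Real.exp (-κ / u))
      volume 0 b := by
  obtain ⟨n, hn⟩ := exists_nat_ge (1 - κ)
  have hκn : 0 ≤ κ - 1 + n := by linarith
  rw [intervalIntegrable_iff, uIoc_of_le hb0.le]
  apply Measure.integrableOn_of_bounded (M := (n.factorial : ℝ) / κ ^ n * (1 - b) ^ (-(κ + 2)))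
    (measure_Ioc_lt_top).ne
  · apply Measurable.aestronglyMeasurable
    fun_prop
  · filter_upwards [ae_restrict_mem measurableSet_Ioc] with u hu
    obtain ⟨hu0, hub⟩ := hu
    have hu1 : u < 1 := lt_of_le_of_lt hub hb1
    have h1u : (0:ℝ) < 1 - u := by linarith
    have h1b : (0:ℝ) < 1 - b := by linarith
    have hA : (1 - u) ^ (-(κ + 2)) ≤ (1 - b) ^ (-(κ + 2)) :=
      Real.rpow_le_rpow_of_nonpos h1b (by linarith) (by linarith)
    have hexp : Real.exp (-κ / u) ≤ (n.factorial : ℝ) * u ^ n / κ ^ n := by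
      have h1 : (κ / u) ^ n / (n.factorial : ℝ) ≤ Real.exp (κ / u) :=
        Real.pow_div_factorial_le_exp (κ / u) (by positivity) n
      have h2 : (0:ℝ) < (κ / u) ^ n / (n.factorial : ℝ) := by positivity
      have h3 : Real.exp (-κ / u) = (Real.exp (κ / u))⁻¹ := by
        rw [← Real.exp_neg]; ring_nf
      rw [h3]
      calc (Real.exp (κ / u))⁻¹ ≤ ((κ / u) ^ n / (n.factorial : ℝ))⁻¹ := by gcongr
        _ = (n.factorial : ℝ) * u ^ n / κ ^ n := by
            rw [div_pow]
            field_simp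
    have hnorm : ‖u ^ (κ - 1) * (1 - u) ^ (-(κ + 2)) * Real.exp (-κ / u)‖
        = u ^ (κ - 1) * (1 - u) ^ (-(κ + 2)) * Real.exp (-κ / u) := by
      rw [Real.norm_eq_abs, abs_of_nonneg]
      positivity
    rw [hnorm]
    calc u ^ (κ - 1) * (1 - u) ^ (-(κ + 2)) * Real.exp (-κ / u)
        ≤ u ^ (κ - 1) * (1 - b) ^ (-(κ + 2)) * ((n.factorial : ℝ) * u ^ n / κ ^ n) := by
          apply mul_le_mul (mul_le_mul le_rfl hA (by positivity) (by positivity)) hexp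
            (Real.exp_pos _).le (by positivity)
      _ = (n.factorial : ℝ) / κ ^ n * (1 - b) ^ (-(κ + 2)) * (u ^ (κ - 1) * u ^ (n:ℕ)) := by ring
      _ = (n.factorial : ℝ) / κ ^ n * (1 - b) ^ (-(κ + 2)) * u ^ (κ - 1 + n) := by
          rw [← Real.rpow_natCast u n, ← Real.rpow_add hu0]
      _ ≤ (n.factorial : ℝ) / κ ^ n * (1 - b) ^ (-(κ + 2)) * 1 := by
          have := Real.rpow_le_one hu0.le hu1.le hκn
          nlinarith [Real.rpow_nonneg (le_of_lt h1b) (-(κ + 2)), pow_pos hκ n, div_nonneg (Nat.cast_nonneg n.factorial) (pow_pos hκ n).le, mul_nonneg (div_nonneg (Nat.cast_nonneg (α := ℝ) n.factorial) (pow_pos hκ n).le) (Real.rpow_nonneg (le_of_lt h1b) (-(κ + 2)))]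
      _ = (n.factorial : ℝ) / κ ^ n * (1 - b) ^ (-(κ + 2)) := by ring

lemma innAux_cont {κ : ℝ} (hκ : 0 < κ) {v : ℝ} (hv0 : 0 < v) (hv1 : v < 1) :
    ContinuousAt (fun x : ℝ =>
      ∫ u in (0:ℝ)..x, u ^ (κ - 1) * (1 - u) ^ (-(κ + 2)) * Real.exp (-κ / u)) v := by
  have hb0 : (0:ℝ) < (v + 1) / 2 := by linarith
  have hvb : v < (v + 1) / 2 := by linarith
  have hb1 : (v + 1) / 2 < 1 := by linarith
  have hint : IntegrableOn (fun u : ℝ =>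
      u ^ (κ - 1) * (1 - u) ^ (-(κ + 2)) * Real.exp (-κ / u)) (uIcc 0 ((v + 1) / 2)) volume := by
    rw [uIcc_of_le hb0.le, integrableOn_Icc_iff_integrableOn_Ioc]
    have := fAux_intInt hκ hb0 hb1
    rwa [intervalIntegrable_iff, uIoc_of_le hb0.le] at this
  have hcont := intervalIntegral.continuousOn_primitive_interval hint
  rw [uIcc_of_le hb0.le] at hcont
  exact hcont.continuousAt (Icc_mem_nhds hv0 hvb)

/-- the candidate value function `V̂` satisfies `V̂(φ*) = 0`, and
the smooth-fit condition `V̂'(φ*) = 0` holds if and only if `φ*` solves the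
transcendental equation (5.9). -/
theorem stmt9 (lam μ c : ℝ) (hlam : 0 < lam) (hμ : μ ≠ 0) (hc : 0 < c)
    (κ : ℝ) (hκ : κ = 2 * lam / μ ^ 2)
    (φs : ℝ) (hφs : 0 < φs)
    (V : ℝ → ℝ)
    (hV : ∀ φ : ℝ, V φ =
      -((φs - φ) / (c * (1 + φs)))
      - 2 / μ ^ 2 * (1 + φ) *
        ∫ v in (φs / (1 + φs))..(φ / (1 + φ)),
          ((1 - v) / v) ^ κ * Real.exp (κ / v) *
            ∫ u in (0:ℝ)..v, u ^ (κ - 1) * (1 - u) ^ (-(κ + 2)) * Real.exp (-κ / u)) :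
    V φs = 0 ∧
    (deriv V φs = 0 ↔
      Real.exp (κ * (1 + φs) / φs) / φs ^ κ *
        ∫ u in (0:ℝ)..(φs / (1 + φs)),
          u ^ (κ - 1) * (1 - u) ^ (-(κ + 2)) * Real.exp (-κ / u)
      = μ ^ 2 / (2 * c)) := by
  have hμ2 : (0:ℝ) < μ ^ 2 := by positivity
  have hκ0 : 0 < κ := by rw [hκ]; positivity
  have h1φs : (0:ℝ) < 1 + φs := by linarith
  set g : ℝ → ℝ := fun v => ((1 - v) / v) ^ κ * Real.exp (κ / v) *
    ∫ u in (0:ℝ)..v, u ^ (κ - 1) * (1 - u) ^ (-(κ + 2)) * Real.exp (-κ / u) with hgdef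
  set a : ℝ := φs / (1 + φs) with hadef
  have ha0 : 0 < a := div_pos hφs h1φs
  have ha1 : a < 1 := (div_lt_one h1φs).2 (by linarith)
  have hfun : V = fun φ : ℝ => -((φs - φ) / (c * (1 + φs)))
      - 2 / μ ^ 2 * (1 + φ) * ∫ v in a..(φ / (1 + φ)), g v := by
    funext φ; rw [hV φ]
  have hVφs : V φs = 0 := by
    rw [hfun]
    simp [hadef]
  refine ⟨hVφs, ?_⟩
  -- continuity of g on Ioo 0 1
  have hgCont : ∀ v ∈ Ioo (0:ℝ) 1, ContinuousAt g v := by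
    rintro v ⟨hv0, hv1⟩
    have h1 : ContinuousAt (fun v : ℝ => ((1 - v) / v) ^ κ) v := by
      apply ContinuousAt.rpow_const
      · exact (continuousAt_const.sub continuousAt_id).div continuousAt_id hv0.ne'
      · exact Or.inr hκ0.le
    have h2 : ContinuousAt (fun v : ℝ => Real.exp (κ / v)) v :=
      (Real.continuous_exp.continuousAt).comp
        (continuousAt_const.div continuousAt_id hv0.ne')
    exact (h1.mul h2).mul (innAux_cont hκ0 hv0 hv1)
  have hmeas : StronglyMeasurableAtFilter g (nhds a) volume :=
    ContinuousAt.stronglyMeasurableAtFilter isOpen_Ioo hgCont a ⟨ha0, ha1⟩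
  have hFTC : HasDerivAt (fun x : ℝ => ∫ v in a..x, g v) (g a) a :=
    intervalIntegral.integral_hasDerivAt_right
      (IntervalIntegrable.refl) hmeas (hgCont a ⟨ha0, ha1⟩)
  have hh : HasDerivAt (fun φ : ℝ => φ / (1 + φ)) (1 / (1 + φs) ^ 2) φs := by
    have hd := (hasDerivAt_id φs).div ((hasDerivAt_id φs).const_add 1) h1φs.ne'
    convert hd using 1
    · rfl
    · rfl
    · rfl
    simp only [id]
    field_simp
    ring
  have hcomp : HasDerivAt (fun φ : ℝ => ∫ v in a..(φ / (1 + φ)), g v)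
      (g a * (1 / (1 + φs) ^ 2)) φs := by
    have : a = φs / (1 + φs) := rfl
    exact HasDerivAt.comp φs (this ▸ hFTC) hh
  have hV1 : HasDerivAt (fun φ : ℝ => -((φs - φ) / (c * (1 + φs))))
      (1 / (c * (1 + φs))) φs := by
    have hd := (((hasDerivAt_id φs).const_sub φs).div_const (c * (1 + φs))).neg
    convert hd using 1
    · rfl
    · rfl
    · rfl
    ring
  have hV2 : HasDerivAt (fun φ : ℝ => 2 / μ ^ 2 * (1 + φ) * ∫ v in a..(φ / (1 + φ)), g v)
      (2 / μ ^ 2 * (g a / (1 + φs))) φs := by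
    have hlin : HasDerivAt (fun φ : ℝ => 1 + φ) 1 φs := (hasDerivAt_id φs).const_add 1
    have hmul := (hlin.mul hcomp).const_mul (2 / μ ^ 2)
    convert hmul using 1
    · rfl
    · rfl
    · funext φ; simp only [Pi.mul_apply]; ring
    · rw [intervalIntegral.integral_same]
      field_simp
      ring
  have hVd : HasDerivAt V (1 / (c * (1 + φs)) - 2 / μ ^ 2 * (g a / (1 + φs))) φs := by
    rw [hfun]; exact hV1.sub hV2
  rw [hVd.deriv]
  -- compute g a
  have h1a : 1 - a = 1 / (1 + φs) := by rw [hadef]; field_simp; ring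
  have h2a : (1 - a) / a = 1 / φs := by
    rw [h1a, hadef]
    rw [div_div_div_eq]
    field_simp
  have h3a : κ / a = κ * (1 + φs) / φs := by
    rw [hadef]; field_simp
  have hga : g a = Real.exp (κ * (1 + φs) / φs) / φs ^ κ *
      ∫ u in (0:ℝ)..a, u ^ (κ - 1) * (1 - u) ^ (-(κ + 2)) * Real.exp (-κ / u) := by
    rw [hgdef]
    simp only
    rw [h2a, h3a, Real.div_rpow zero_le_one hφs.le, Real.one_rpow]
    ring
  set T : ℝ := Real.exp (κ * (1 + φs) / φs) / φs ^ κ *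
      ∫ u in (0:ℝ)..a, u ^ (κ - 1) * (1 - u) ^ (-(κ + 2)) * Real.exp (-κ / u) with hT
  rw [hga]
  have key : 1 / (c * (1 + φs)) - 2 / μ ^ 2 * (T / (1 + φs))
      = (μ ^ 2 - 2 * c * T) / (c * μ ^ 2 * (1 + φs)) := by
    field_simp
  rw [key, div_eq_zero_iff]
  constructor
  · rintro (h | h)
    · rw [eq_div_iff (by positivity : (2:ℝ) * c ≠ 0)]
      linarith
    · exact absurd h (by positivity)
  · intro h
    left
    rw [h]
    field_simp
    ring
end

section
/- If A > 0 then the function φ ↦ A(1+φ)∫_{1/2}^{φ/(1+φ)} ((1−v)/v)^κ e^{κ/v} dv has right derivative +∞ at 0, and if A < 0 its right derivative at 0 is −∞. -/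
open Real Set Filter intervalIntegral

noncomputable def ff (κ v : ℝ) : ℝ := ((1 - v) / v) ^ κ * Real.exp (κ / v)

lemma ff_contOn (κ : ℝ) : ContinuousOn (ff κ) (Ioo 0 1) := by
  intro v hv
  have hv0 : (v : ℝ) ≠ 0 := ne_of_gt hv.1
  have hbase : (0:ℝ) < (1 - v) / v := div_pos (by linarith [hv.2]) hv.1
  exact (((continuousWithinAt_const.sub continuousWithinAt_id).div
      continuousWithinAt_id hv0).rpow_const (Or.inl (ne_of_gt hbase))).mul
    (Real.continuous_exp.continuousAt.comp_continuousWithinAt (continuousWithinAt_const.div continuousWithinAt_id hv0))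

lemma ff_pos {κ v : ℝ} (hv : v ∈ Ioo (0:ℝ) 1) : 0 < ff κ v := by
  have hbase : (0:ℝ) < (1 - v) / v := div_pos (by linarith [hv.2]) hv.1
  exact mul_pos (Real.rpow_pos_of_pos hbase κ) (Real.exp_pos _)

lemma ff_le {κ a b : ℝ} (hκ : 0 < κ) (ha : 0 < a) (hab : a ≤ b) (hb : b < 1) :
    ff κ b ≤ ff κ a := by
  have hb0 : 0 < b := lt_of_lt_of_le ha hab
  have h1 : (1 - b) / b ≤ (1 - a) / a := by
    rw [div_le_div_iff₀ hb0 ha]; nlinarith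
  have h2 : ((1 - b) / b) ^ κ ≤ ((1 - a) / a) ^ κ :=
    Real.rpow_le_rpow (div_nonneg (by linarith) hb0.le) h1 hκ.le
  have h3 : Real.exp (κ / b) ≤ Real.exp (κ / a) := by
    apply Real.exp_le_exp.2
    exact div_le_div_of_nonneg_left hκ.le ha hab
  have hbase : (0:ℝ) ≤ ((1 - b) / b) ^ κ := (Real.rpow_pos_of_pos (div_pos (by linarith) hb0) κ).le
  exact mul_le_mul h2 h3 (Real.exp_pos _).le
    (Real.rpow_pos_of_pos (div_pos (by linarith) ha) κ).le

lemma ff_ge_exp {κ v : ℝ} (hκ : 0 < κ) (hv : 0 < v) (hv2 : v ≤ 1/2) :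
    Real.exp (κ / v) ≤ ff κ v := by
  have hbase : (1:ℝ) ≤ (1 - v) / v := by
    rw [le_div_iff₀ hv]; linarith
  have := Real.one_le_rpow hbase hκ.le
  calc Real.exp (κ / v) = 1 * Real.exp (κ / v) := (one_mul _).symm
    _ ≤ ((1 - v) / v) ^ κ * Real.exp (κ / v) :=
        mul_le_mul_of_nonneg_right this (Real.exp_pos _).le

lemma ff_intble {κ a : ℝ} (ha : 0 < a) (ha2 : a ≤ 1/2) :
    IntervalIntegrable (ff κ) MeasureTheory.volume a (1/2) := by
  apply ContinuousOn.intervalIntegrable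
  apply (ff_contOn κ).mono
  rw [uIcc_of_le ha2]
  intro x hx
  exact ⟨lt_of_lt_of_le ha hx.1, lt_of_le_of_lt hx.2 (by norm_num)⟩

/-- the derivative of
`h(φ) = A(1+φ)∫_{1/2}^{φ/(1+φ)} ((1−v)/v)^κ e^{κ/v} dv`
tends to `+∞` as `φ → 0+` if `A > 0`, and to `−∞` if `A < 0`. -/
theorem stmt11 (κ A : ℝ) (hκ : 0 < κ) (hA : A ≠ 0)
    (h : ℝ → ℝ)
    (hh : ∀ φ : ℝ, h φ =
      A * (1 + φ) * ∫ v in (1/2 : ℝ)..(φ / (1 + φ)),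
        ((1 - v) / v) ^ κ * Real.exp (κ / v)) :
    (0 < A → Filter.Tendsto (deriv h) (nhdsWithin 0 (Set.Ioi 0)) Filter.atTop) ∧
    (A < 0 → Filter.Tendsto (deriv h) (nhdsWithin 0 (Set.Ioi 0)) Filter.atBot) := by
  have hfun : h = fun φ => A * (1 + φ) * ∫ v in (1/2 : ℝ)..(φ / (1 + φ)), ff κ v := by
    funext φ; rw [hh]; rfl
  -- key estimate on deriv h
  have key : ∀ φ ∈ Ioo (0:ℝ) (1/2), ∃ c : ℝ,
      Real.exp (κ / φ) / 6 ≤ c ∧ deriv h φ = A * c := by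
    intro φ hφ
    have hφ0 : 0 < φ := hφ.1
    have h1φ : (0:ℝ) < 1 + φ := by linarith
    set g : ℝ := φ / (1 + φ) with hg
    have hg0 : 0 < g := div_pos hφ0 h1φ
    have hglt : g < φ := by
      rw [hg, div_lt_iff₀ h1φ]; nlinarith
    have hg2 : g < 1/2 := lt_trans hglt hφ.2
    have hgI : g ∈ Ioo (0:ℝ) 1 := ⟨hg0, by linarith⟩
    -- derivative of the integral
    have hF : HasDerivAt (fun u => ∫ v in (1/2:ℝ)..u, ff κ v) (ff κ g) g := by
      apply intervalIntegral.integral_hasDerivAt_right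
      · exact (ff_intble hg0 hg2.le).symm
      · exact (ff_contOn κ).stronglyMeasurableAtFilter isOpen_Ioo g hgI
      · exact (ff_contOn κ).continuousAt (Ioo_mem_nhds hgI.1 hgI.2)
    -- derivative of φ ↦ φ/(1+φ)
    have hden : HasDerivAt (fun x : ℝ => 1 + x) 1 φ := by
      exact (hasDerivAt_id φ).const_add (1:ℝ)
    have hgd : HasDerivAt (fun x : ℝ => x / (1 + x))
        ((1 * (1 + φ) - φ * 1) / (1 + φ) ^ 2) φ :=
      (hasDerivAt_id φ).div hden (ne_of_gt h1φ)
    have hcomp : HasDerivAt (fun x : ℝ => ∫ v in (1/2:ℝ)..(x / (1 + x)), ff κ v)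
        (ff κ g * ((1 * (1 + φ) - φ * 1) / (1 + φ) ^ 2)) φ := by have := hF.comp φ hgd; exact this
    have hlin : HasDerivAt (fun x : ℝ => A * (1 + x)) A φ := by
      simpa using ((hasDerivAt_const φ 1).add (hasDerivAt_id φ)).const_mul A
    have hd : HasDerivAt h
        (A * (∫ v in (1/2:ℝ)..g, ff κ v)
          + A * (1 + φ) * (ff κ g * ((1 * (1 + φ) - φ * 1) / (1 + φ) ^ 2))) φ := by
      rw [hfun]; exact hlin.mul hcomp
    have hderiv : deriv h φ =
        A * ((∫ v in (1/2:ℝ)..g, ff κ v) + ff κ g / (1 + φ)) := by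
      rw [hd.deriv]; field_simp; ring
    refine ⟨(∫ v in (1/2:ℝ)..g, ff κ v) + ff κ g / (1 + φ), ?_, hderiv⟩
    -- bound the integral
    have hIbd : ∫ v in g..(1/2:ℝ), ff κ v ≤ (1/2) * ff κ g := by
      have h1 : ∫ v in g..(1/2:ℝ), ff κ v ≤ ∫ _v in g..(1/2:ℝ), ff κ g := by
        apply intervalIntegral.integral_mono_on hg2.le (ff_intble hg0 hg2.le)
          intervalIntegrable_const
        intro x hx
        exact ff_le hκ hg0 hx.1 (lt_of_le_of_lt hx.2 (by norm_num))
      have h2 : ∫ _v in g..(1/2:ℝ), ff κ g = (1/2 - g) * ff κ g := by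
        simp [smul_eq_mul]
      rw [h2] at h1
      have : (1/2 - g) * ff κ g ≤ (1/2) * ff κ g :=
        mul_le_mul_of_nonneg_right (by linarith) (ff_pos hgI).le
      linarith
    have hsymm : (∫ v in (1/2:ℝ)..g, ff κ v) = - ∫ v in g..(1/2:ℝ), ff κ v :=
      intervalIntegral.integral_symm g (1/2)
    have hfrac : (2/3 : ℝ) * ff κ g ≤ ff κ g / (1 + φ) := by
      rw [le_div_iff₀ h1φ]
      have : (2/3 : ℝ) * (1 + φ) ≤ 1 := by linarith [hφ.2]
      calc (2/3:ℝ) * ff κ g * (1 + φ) = ((2/3) * (1+φ)) * ff κ g := by ring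
        _ ≤ 1 * ff κ g := mul_le_mul_of_nonneg_right this (ff_pos hgI).le
        _ = ff κ g := one_mul _
    have hexpg : Real.exp (κ / φ) ≤ ff κ g := by
      have h1 : κ / φ ≤ κ / g := div_le_div_of_nonneg_left hκ.le hg0 hglt.le
      exact le_trans (Real.exp_le_exp.2 h1) (ff_ge_exp hκ hg0 hg2.le)
    have : ff κ g / 6 ≤ (∫ v in (1/2:ℝ)..g, ff κ v) + ff κ g / (1 + φ) := by
      rw [hsymm]; linarith
    linarith
  -- the comparison function tends to +∞
  have hexp : Tendsto (fun φ : ℝ => Real.exp (κ / φ)) (nhdsWithin 0 (Ioi 0)) atTop := by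
    apply Real.tendsto_exp_atTop.comp
    have : Tendsto (fun φ : ℝ => φ⁻¹) (nhdsWithin 0 (Ioi 0)) atTop := tendsto_inv_nhdsGT_zero
    exact (this.const_mul_atTop hκ).congr fun x => by rw [div_eq_mul_inv]
  have hmem : Ioo (0:ℝ) (1/2) ∈ nhdsWithin (0:ℝ) (Ioi 0) :=
    Ioo_mem_nhdsGT_of_mem ⟨le_refl 0, by norm_num⟩
  constructor
  · intro hApos
    have hA6 : (0:ℝ) < A / 6 := by linarith
    have hcmp : Tendsto (fun φ : ℝ => A / 6 * Real.exp (κ / φ))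
        (nhdsWithin 0 (Ioi 0)) atTop := hexp.const_mul_atTop hA6
    have hev : ∀ᶠ φ in nhdsWithin (0:ℝ) (Ioi 0),
        A / 6 * Real.exp (κ / φ) ≤ deriv h φ := by
      filter_upwards [hmem] with φ hφ
      obtain ⟨c, hc1, hc2⟩ := key φ hφ
      rw [hc2]
      calc A / 6 * Real.exp (κ / φ) = A * (Real.exp (κ / φ) / 6) := by ring
        _ ≤ A * c := mul_le_mul_of_nonneg_left hc1 hApos.le
    exact tendsto_atTop_mono' _ hev hcmp
  · intro hAneg
    have hA6 : (0:ℝ) < -A / 6 := by linarith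
    have hcmp0 : Tendsto (fun φ : ℝ => -A / 6 * Real.exp (κ / φ))
        (nhdsWithin 0 (Ioi 0)) atTop := hexp.const_mul_atTop hA6
    have hcmp : Tendsto (fun φ : ℝ => -(-A / 6 * Real.exp (κ / φ)))
        (nhdsWithin 0 (Ioi 0)) atBot := tendsto_neg_atBot_iff.2 hcmp0
    have hev : ∀ᶠ φ in nhdsWithin (0:ℝ) (Ioi 0),
        deriv h φ ≤ -(-A / 6 * Real.exp (κ / φ)) := by
      filter_upwards [hmem] with φ hφ
      obtain ⟨c, hc1, hc2⟩ := key φ hφ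
      rw [hc2]
      have : A * c ≤ A * (Real.exp (κ / φ) / 6) :=
        mul_le_mul_of_nonpos_left hc1 hAneg.le
      calc A * c ≤ A * (Real.exp (κ / φ) / 6) := this
        _ = -(-A / 6 * Real.exp (κ / φ)) := by ring
    exact tendsto_atBot_mono' _ hev hcmp
end

section
/- The function h(φ) = (1+φ)∫_{1/2}^{φ/(1+φ)} ((1−v)/v)^κ e^{κ/v} dv satisfies the homogeneous equation λ(1+φ) h'(φ) + (μ²/2) φ² h''(φ) − λ h(φ) = 0 on (0,∞), as does the function φ ↦ 1 + φ. -/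
open Real Set intervalIntegral

noncomputable def fV (κ v : ℝ) : ℝ := ((1 - v) / v) ^ κ * Real.exp (κ / v)

lemma fV_hasDerivAt (κ : ℝ) {v : ℝ} (hv : v ∈ Set.Ioo (0:ℝ) 1) :
    HasDerivAt (fV κ) (-κ * fV κ v / (v ^ 2 * (1 - v))) v := by
  obtain ⟨h0, h1⟩ := hv
  have hv0 : v ≠ 0 := ne_of_gt h0
  have h1v : (0:ℝ) < 1 - v := by linarith
  have hb : (0:ℝ) < (1 - v) / v := div_pos h1v h0
  have hbase : HasDerivAt (fun v : ℝ => (1 - v) / v) (-1 / v ^ 2) v := by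
    have h1' : HasDerivAt (fun v : ℝ => 1 - v) (-1) v := by
      exact ((hasDerivAt_const v (1:ℝ)).sub (hasDerivAt_id v)).congr_deriv (by norm_num)
    have := h1'.div (hasDerivAt_id v) hv0
    refine this.congr_deriv ?_
    simp only [id_eq, Pi.add_apply]
    field_simp
    ring
  have hpow : HasDerivAt (fun v : ℝ => ((1 - v) / v) ^ κ)
      (κ * ((1 - v) / v) ^ (κ - 1) * (-1 / v ^ 2)) v := by
    have := hbase.rpow_const (p := κ) (Or.inl hb.ne')
    convert this using 1
    ring
  have hexp : HasDerivAt (fun v : ℝ => Real.exp (κ / v))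
      (Real.exp (κ / v) * (-κ / v ^ 2)) v := by
    have hq : HasDerivAt (fun v : ℝ => κ / v) (-κ / v ^ 2) v := by
      have := (hasDerivAt_const v κ).div (hasDerivAt_id v) hv0
      refine this.congr_deriv ?_
      simp only [id_eq, Pi.add_apply]
      field_simp
      ring
    simpa [mul_comm] using hq.exp
  have := hpow.mul hexp
  refine this.congr_deriv ?_
  have hsub : ((1 - v) / v) ^ (κ - 1) = ((1 - v) / v) ^ κ / ((1 - v) / v) := by
    rw [Real.rpow_sub hb, Real.rpow_one]
  rw [hsub]
  simp only [fV]
  field_simp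
  ring

/-- both `h(φ) = (1+φ)∫_{1/2}^{φ/(1+φ)} ((1−v)/v)^κ e^{κ/v} dv`
and the affine function `φ ↦ 1+φ` solve the homogeneous ODE
`λ(1+φ) y' + (μ²/2) φ² y'' − λ y = 0` on `(0,∞)`. -/
theorem stmt12 (lam μ : ℝ) (hlam : 0 < lam) (hμ : μ ≠ 0)
    (κ : ℝ) (hκ : κ = 2 * lam / μ ^ 2)
    (h : ℝ → ℝ)
    (hh : ∀ φ : ℝ, h φ =
      (1 + φ) * ∫ v in (1/2 : ℝ)..(φ / (1 + φ)),
        ((1 - v) / v) ^ κ * Real.exp (κ / v)) :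
    (∀ φ ∈ Set.Ioi (0:ℝ),
      lam * (1 + φ) * deriv h φ + μ ^ 2 / 2 * φ ^ 2 * deriv (deriv h) φ
        - lam * h φ = 0) ∧
    (∀ φ ∈ Set.Ioi (0:ℝ),
      lam * (1 + φ) * deriv (fun x : ℝ => 1 + x) φ
        + μ ^ 2 / 2 * φ ^ 2 * deriv (deriv (fun x : ℝ => 1 + x)) φ
        - lam * (1 + φ) = 0) := by
  set F : ℝ → ℝ := fun x => ∫ v in (1/2 : ℝ)..x, fV κ v with hF
  have hcont : ContinuousOn (fV κ) (Set.Ioo (0:ℝ) 1) := fun v hv =>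
    ((fV_hasDerivAt κ hv).continuousAt).continuousWithinAt
  have hhalf : (1/2 : ℝ) ∈ Set.Ioo (0:ℝ) 1 := by norm_num
  -- FTC
  have hFTC : ∀ x ∈ Set.Ioo (0:ℝ) 1, HasDerivAt F (fV κ x) x := by
    intro x hx
    have hsub : Set.uIcc (1/2 : ℝ) x ⊆ Set.Ioo (0:ℝ) 1 :=
      Set.ordConnected_Ioo.uIcc_subset hhalf hx
    have hint : IntervalIntegrable (fV κ) MeasureTheory.volume (1/2) x :=
      (hcont.mono hsub).intervalIntegrable
    exact intervalIntegral.integral_hasDerivAt_right hint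
      (ContinuousOn.stronglyMeasurableAtFilter isOpen_Ioo hcont x hx)
      ((fV_hasDerivAt κ hx).continuousAt)
  -- h as explicit function
  have hhf : h = fun x => (1 + x) * F (x / (1 + x)) := by
    funext x; rw [hh x]; rfl
  -- generic facts at each φ > 0
  have hgmem : ∀ φ : ℝ, 0 < φ → φ / (1 + φ) ∈ Set.Ioo (0:ℝ) 1 := by
    intro φ hφ
    have h1 : (0:ℝ) < 1 + φ := by linarith
    constructor
    · positivity
    · rw [div_lt_one h1]; linarith
  have hgder : ∀ φ : ℝ, 0 < φ →
      HasDerivAt (fun x : ℝ => x / (1 + x)) (1 / (1 + φ) ^ 2) φ := by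
    intro φ hφ
    have h1 : (1 + φ) ≠ 0 := by positivity
    have := (hasDerivAt_id φ).div ((hasDerivAt_const φ (1:ℝ)).add (hasDerivAt_id φ)) h1
    refine this.congr_deriv ?_
    simp only [id_eq, Pi.add_apply]
    field_simp
    ring
  -- first derivative
  have hD1 : ∀ φ : ℝ, 0 < φ →
      HasDerivAt h (F (φ / (1 + φ)) + fV κ (φ / (1 + φ)) / (1 + φ)) φ := by
    intro φ hφ
    have h1 : (1 + φ) ≠ 0 := by positivity
    have hcomp : HasDerivAt (fun x : ℝ => F (x / (1 + x)))
        (fV κ (φ / (1 + φ)) * (1 / (1 + φ) ^ 2)) φ :=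
      (hFTC _ (hgmem φ hφ)).comp (h₂ := F) φ (hgder φ hφ)
    have := ((hasDerivAt_const φ (1:ℝ)).add (hasDerivAt_id φ)).mul hcomp
    rw [hhf]
    refine this.congr_deriv ?_
    simp only [id_eq, Pi.add_apply]
    field_simp
    ring
  set D1 : ℝ → ℝ := fun x => F (x / (1 + x)) + fV κ (x / (1 + x)) / (1 + x) with hD1def
  have hderiv_h : ∀ φ : ℝ, 0 < φ → deriv h φ = D1 φ := fun φ hφ => (hD1 φ hφ).deriv
  -- second derivative
  have hD2 : ∀ φ : ℝ, 0 < φ →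
      HasDerivAt D1 (-κ * fV κ (φ / (1 + φ)) / φ ^ 2) φ := by
    intro φ hφ
    have h1 : (0:ℝ) < 1 + φ := by linarith
    have h1' : (1 + φ) ≠ 0 := h1.ne'
    have hg := hgmem φ hφ
    have hFg : HasDerivAt (fun x : ℝ => F (x / (1 + x)))
        (fV κ (φ / (1 + φ)) * (1 / (1 + φ) ^ 2)) φ :=
      (hFTC _ hg).comp (h₂ := F) φ (hgder φ hφ)
    have hfg : HasDerivAt (fun x : ℝ => fV κ (x / (1 + x)))
        (-κ * fV κ (φ / (1 + φ)) / ((φ / (1 + φ)) ^ 2 * (1 - φ / (1 + φ)))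
          * (1 / (1 + φ) ^ 2)) φ :=
      (fV_hasDerivAt κ hg).comp (h₂ := fV κ) φ (hgder φ hφ)
    have hinv : HasDerivAt (fun x : ℝ => (1 + x)⁻¹) (-(1 / (1 + φ) ^ 2)) φ := by
      have := ((hasDerivAt_const φ (1:ℝ)).add (hasDerivAt_id φ)).inv h1'
      refine this.congr_deriv ?_
      simp only [id_eq, Pi.add_apply]
      field_simp
      ring
    have hmul := hfg.mul hinv
    have htot := hFg.add hmul
    have heq : D1 = fun x => F (x / (1 + x)) + fV κ (x / (1 + x)) * (1 + x)⁻¹ := by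
      funext x; simp [hD1def, div_eq_mul_inv]
    rw [heq]
    refine htot.congr_deriv ?_
    have hg2 : 1 - φ / (1 + φ) = 1 / (1 + φ) := by field_simp; ring
    rw [hg2]
    field_simp
    ring
  constructor
  · intro φ hφ
    have hφ0 : 0 < φ := hφ
    have hd1 : deriv h φ = D1 φ := hderiv_h φ hφ0
    have hd2 : deriv (deriv h) φ = -κ * fV κ (φ / (1 + φ)) / φ ^ 2 := by
      have hev : deriv h =ᶠ[nhds φ] D1 := by
        filter_upwards [Ioi_mem_nhds hφ0] with x hx
        exact hderiv_h x hx
      rw [hev.deriv_eq]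
      exact (hD2 φ hφ0).deriv
    rw [hd1, hd2, hhf]
    have h1 : (1 + φ) ≠ 0 := by positivity
    simp only [hD1def]
    subst hκ
    field_simp
    ring
  · intro φ hφ
    have d1 : deriv (fun x : ℝ => 1 + x) = fun _ : ℝ => (1:ℝ) := by
      funext x
      simpa using ((hasDerivAt_const x (1:ℝ)).add (hasDerivAt_id x)).deriv
    rw [d1]
    simp
end

section
/- For any κ > 0, the integral ∫₀^v u^{κ−1}(1−u)^{−(κ+2)} e^{−κ/u} du is finite for every v ∈ (0,1), and the function v ↦ ((1−v)/v)^κ e^{κ/v} ∫₀^v u^{κ−1}(1−u)^{−(κ+2)} e^{−κ/u} du extends continuously to v = 0 with value 0. -/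
open Real Set Filter MeasureTheory intervalIntegral

lemma aux_t_exp (t : ℝ) (ht : 0 ≤ t) : t * Real.exp (-t) ≤ 1 := by
  rw [Real.exp_neg, mul_inv_le_iff₀ (Real.exp_pos t), one_mul]
  linarith [Real.add_one_le_exp t]

lemma aux_t2_exp (t : ℝ) (ht : 0 ≤ t) : t^2 * Real.exp (-t) ≤ 4 := by
  rw [Real.exp_neg, mul_inv_le_iff₀ (Real.exp_pos t)]
  have h : Real.exp t = (Real.exp (t/2))^2 := by
    rw [← Real.exp_nat_mul]; ring_nf
  have h2 : (t/2 + 1) ≤ Real.exp (t/2) := Real.add_one_le_exp _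
  nlinarith [Real.exp_pos (t/2)]

-- bounds on (0,1]
lemma aux_b1 {κ u : ℝ} (hκ : 0 < κ) (hu : 0 < u) (hu1 : u ≤ 1) :
    u ^ (κ - 1) * Real.exp (-κ / u) ≤ 1 / κ := by
  have h1 : u ^ (κ - 1) = u ^ κ * u⁻¹ := by
    rw [Real.rpow_sub hu, Real.rpow_one]; ring
  have huk : u ^ κ ≤ 1 := Real.rpow_le_one hu.le hu1 hκ.le
  have hukn : (0:ℝ) ≤ u ^ κ := Real.rpow_nonneg hu.le κ
  have key : u⁻¹ * Real.exp (-κ / u) ≤ 1 / κ := by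
    have := aux_t_exp (κ / u) (by positivity)
    have hh : -(κ/u) = -κ/u := by ring
    rw [hh] at this
    rw [le_div_iff₀ hκ]
    calc u⁻¹ * Real.exp (-κ / u) * κ = (κ / u) * Real.exp (-κ/u) := by ring
      _ ≤ 1 := this
  calc u ^ (κ - 1) * Real.exp (-κ / u) = u ^ κ * (u⁻¹ * Real.exp (-κ / u)) := by
        rw [h1]; ring
    _ ≤ 1 * (1/κ) := by
        apply mul_le_mul huk key (by positivity) zero_le_one
    _ = 1 / κ := by ring

lemma aux_b2 {κ u : ℝ} (hκ : 0 < κ) (hu : 0 < u) (hu1 : u ≤ 1) :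
    u ^ (κ - 2) * Real.exp (-κ / u) ≤ 4 / κ ^ 2 := by
  have h1 : u ^ (κ - 2) = u ^ κ * (u⁻¹)^2 := by
    rw [Real.rpow_sub hu, show (2:ℝ) = ((2:ℕ):ℝ) by norm_num, Real.rpow_natCast]
    field_simp
  have huk : u ^ κ ≤ 1 := Real.rpow_le_one hu.le hu1 hκ.le
  have key : (u⁻¹)^2 * Real.exp (-κ / u) ≤ 4 / κ^2 := by
    have := aux_t2_exp (κ / u) (by positivity)
    have hh : -(κ/u) = -κ/u := by ring
    rw [hh] at this
    rw [le_div_iff₀ (by positivity : (0:ℝ) < κ^2)]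
    calc (u⁻¹)^2 * Real.exp (-κ / u) * κ^2 = (κ/u)^2 * Real.exp (-κ/u) := by ring
      _ ≤ 4 := this
  calc u ^ (κ - 2) * Real.exp (-κ / u) = u ^ κ * ((u⁻¹)^2 * Real.exp (-κ / u)) := by
        rw [h1]; ring
    _ ≤ 1 * (4/κ^2) := mul_le_mul huk key (by positivity) zero_le_one
    _ = 4 / κ^2 := by ring

-- generic: measurable, bounded on Ioc 0 v, nonneg ⇒ interval integrable
lemma aux_intgen {f : ℝ → ℝ} {v M : ℝ} (hv : 0 ≤ v) (hm : Measurable f)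
    (hb : ∀ u ∈ Set.Ioc 0 v, |f u| ≤ M) :
    IntervalIntegrable f MeasureTheory.volume 0 v := by
  rw [intervalIntegrable_iff_integrableOn_Ioc_of_le hv]
  apply MeasureTheory.Measure.integrableOn_of_bounded (M := M)
      measure_Ioc_lt_top.ne hm.aestronglyMeasurable
  filter_upwards [MeasureTheory.ae_restrict_mem measurableSet_Ioc] with u hu
  simpa [Real.norm_eq_abs] using hb u hu

lemma aux_int1 {κ v : ℝ} (hκ : 0 < κ) (hv : 0 ≤ v) (hv1 : v ≤ 1) :
    IntervalIntegrable (fun u => u ^ (κ - 1) * Real.exp (-κ / u))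
      MeasureTheory.volume 0 v := by
  apply aux_intgen hv (by fun_prop)
  intro u hu
  rw [abs_of_nonneg (mul_nonneg (Real.rpow_nonneg hu.1.le _) (Real.exp_pos _).le)]
  exact aux_b1 hκ hu.1 (hu.2.trans hv1)

lemma aux_int2 {κ v : ℝ} (hκ : 0 < κ) (hv : 0 ≤ v) (hv1 : v ≤ 1) :
    IntervalIntegrable (fun u => u ^ (κ - 2) * Real.exp (-κ / u))
      MeasureTheory.volume 0 v := by
  apply aux_intgen hv (by fun_prop)
  intro u hu
  rw [abs_of_nonneg (mul_nonneg (Real.rpow_nonneg hu.1.le _) (Real.exp_pos _).le)]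
  exact aux_b2 hκ hu.1 (hu.2.trans hv1)

lemma aux_int3 {κ v : ℝ} (hκ : 0 < κ) (hv : 0 ≤ v) (hv1 : v ≤ 1) :
    IntervalIntegrable
      (fun u => κ * (u ^ (κ - 1) * Real.exp (-κ / u)) + κ * (u ^ (κ - 2) * Real.exp (-κ / u)))
      MeasureTheory.volume 0 v :=
  ((aux_int1 hκ hv hv1).const_mul κ).add ((aux_int2 hκ hv hv1).const_mul κ)

-- FTC
lemma aux_ftc {κ v : ℝ} (hκ : 0 < κ) (hv : 0 < v) (hv1 : v ≤ 1) :
    ∫ u in (0:ℝ)..v,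
        (κ * (u ^ (κ - 1) * Real.exp (-κ / u)) + κ * (u ^ (κ - 2) * Real.exp (-κ / u)))
      = v ^ κ * Real.exp (-κ / v) := by
  have key := intervalIntegral.integral_eq_sub_of_hasDerivAt_of_le (f := fun u => u ^ κ * Real.exp (-κ / u))
    (f' := fun u => κ * (u ^ (κ - 1) * Real.exp (-κ / u)) + κ * (u ^ (κ - 2) * Real.exp (-κ / u)))
    hv.le ?_ ?_ (aux_int3 hκ hv.le hv1)
  · rw [key]
    norm_num [Real.zero_rpow hκ.ne']
  · -- continuity on Icc
    intro x hx
    rcases eq_or_lt_of_le hx.1 with h0 | h0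
    · -- x = 0
      subst h0
      have h00 : (fun u : ℝ => u ^ κ * Real.exp (-κ / u)) 0 = 0 := by
        simp [Real.zero_rpow hκ.ne']
      unfold ContinuousWithinAt
      rw [h00]
      have hup : Tendsto (fun u : ℝ => u ^ κ) (nhdsWithin 0 (Set.Icc 0 v)) (nhds 0) := by
        have := (Real.continuousAt_rpow_const 0 κ (Or.inr hκ.le)).tendsto
        rw [Real.zero_rpow hκ.ne'] at this
        exact this.mono_left nhdsWithin_le_nhds
      apply tendsto_of_tendsto_of_tendsto_of_le_of_le' tendsto_const_nhds hup
      · filter_upwards [self_mem_nhdsWithin] with u hu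
        exact mul_nonneg (Real.rpow_nonneg hu.1 κ) (Real.exp_pos _).le
      · filter_upwards [self_mem_nhdsWithin] with u hu
        have : Real.exp (-κ / u) ≤ 1 := by
          rw [Real.exp_le_one_iff]
          exact div_nonpos_of_nonpos_of_nonneg (by linarith) hu.1
        calc u ^ κ * Real.exp (-κ / u) ≤ u ^ κ * 1 :=
              mul_le_mul_of_nonneg_left this (Real.rpow_nonneg hu.1 κ)
          _ = u ^ κ := mul_one _
    · -- x > 0
      apply ContinuousAt.continuousWithinAt
      have c1 : ContinuousAt (fun u : ℝ => u ^ κ) x :=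
        Real.continuousAt_rpow_const x κ (Or.inl h0.ne')
      have c2 : ContinuousAt (fun u : ℝ => Real.exp (-κ / u)) x :=
        (Real.continuous_exp.continuousAt).comp
          ((continuousAt_const.div continuousAt_id h0.ne'))
      exact c1.mul c2
  · -- derivative on Ioo
    intro x hx
    have hx0 : (0:ℝ) < x := hx.1
    have h1 : HasDerivAt (fun u : ℝ => u ^ κ) (κ * x ^ (κ - 1)) x :=
      Real.hasDerivAt_rpow_const (Or.inl hx0.ne')
    have h2 : HasDerivAt (fun u : ℝ => -κ / u) (κ / x ^ 2) x := by
      have H := (hasDerivAt_inv hx0.ne').const_mul (-κ)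
      have e1 : (fun u:ℝ => -κ / u) = fun u => -κ * u⁻¹ := by
        funext u; rw [div_eq_mul_inv]
      rw [e1]
      refine H.congr_deriv ?_
      field_simp
    have h3 : HasDerivAt (fun u : ℝ => Real.exp (-κ / u))
        (Real.exp (-κ / x) * (κ / x ^ 2)) x := h2.exp
    have h := h1.mul h3
    refine h.congr_deriv ?_
    have hsub : x ^ (κ - 2) = x ^ κ / x ^ 2 := by
      rw [Real.rpow_sub hx0, show ((2:ℝ)) = ((2:ℕ):ℝ) by norm_num, Real.rpow_natCast]
    simp only [hsub]
    field_simp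

lemma aux_cmp {κ v : ℝ} (hκ : 0 < κ) (hv : 0 < v) (hv1 : v ≤ 1) :
    ∫ u in Set.Ioc (0:ℝ) v, u ^ (κ - 1) * Real.exp (-κ / u)
      ≤ (v / κ) * (v ^ κ * Real.exp (-κ / v)) := by
  have hi1 : IntegrableOn (fun u : ℝ => u ^ (κ - 1) * Real.exp (-κ / u)) (Set.Ioc 0 v) :=
    (intervalIntegrable_iff_integrableOn_Ioc_of_le hv.le).mp (aux_int1 hκ hv.le hv1)
  have hi3 : IntegrableOn
      (fun u : ℝ => κ * (u ^ (κ - 1) * Real.exp (-κ / u)) + κ * (u ^ (κ - 2) * Real.exp (-κ / u)))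
      (Set.Ioc 0 v) :=
    (intervalIntegrable_iff_integrableOn_Ioc_of_le hv.le).mp (aux_int3 hκ hv.le hv1)
  have hftc : ∫ u in Set.Ioc (0:ℝ) v,
      (κ * (u ^ (κ - 1) * Real.exp (-κ / u)) + κ * (u ^ (κ - 2) * Real.exp (-κ / u)))
      = v ^ κ * Real.exp (-κ / v) := by
    rw [← intervalIntegral.integral_of_le hv.le]
    exact aux_ftc hκ hv hv1
  have step : ∫ u in Set.Ioc (0:ℝ) v, κ * (u ^ (κ - 1) * Real.exp (-κ / u))
      ≤ ∫ u in Set.Ioc (0:ℝ) v,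
          v * (κ * (u ^ (κ - 1) * Real.exp (-κ / u)) + κ * (u ^ (κ - 2) * Real.exp (-κ / u))) := by
    apply MeasureTheory.setIntegral_mono_on (hi1.const_mul κ) (hi3.const_mul v)
      measurableSet_Ioc
    intro u hu
    have hu0 : 0 < u := hu.1
    have hr : u ^ (κ - 1) = u ^ (κ - 2) * u := by
      rw [show κ - 1 = (κ - 2) + 1 by ring, Real.rpow_add hu0, Real.rpow_one]
    rw [hr]
    have hA : (0:ℝ) ≤ u ^ (κ - 2) := Real.rpow_nonneg hu0.le _
    have he : (0:ℝ) < Real.exp (-κ / u) := Real.exp_pos _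
    nlinarith [hu.2, mul_nonneg (mul_nonneg hκ.le hA) he.le,
      mul_nonneg (mul_nonneg (mul_nonneg hv.le hκ.le) hA) (mul_nonneg hu0.le he.le)]
  rw [MeasureTheory.integral_const_mul, MeasureTheory.integral_const_mul, hftc] at step
  rw [div_mul_eq_mul_div, le_div_iff₀ hκ]
  linarith

-- part 1: integrability of the full integrand
lemma aux_full_int {κ : ℝ} (hκ : 0 < κ) {v : ℝ} (hv : v ∈ Set.Ioo (0:ℝ) 1) :
    IntervalIntegrable
      (fun u => u ^ (κ - 1) * (1 - u) ^ (-(κ + 2)) * Real.exp (-κ / u))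
      MeasureTheory.volume 0 v := by
  apply aux_intgen (M := (1 / κ) * (1 - v) ^ (-(κ + 2))) hv.1.le (by fun_prop)
  intro u hu
  have h1u : (0:ℝ) < 1 - u := by linarith [hu.2, hv.2]
  have h1v : (0:ℝ) < 1 - v := by linarith [hv.2]
  have hnn : (0:ℝ) ≤ u ^ (κ - 1) * (1 - u) ^ (-(κ + 2)) * Real.exp (-κ / u) :=
    mul_nonneg (mul_nonneg (Real.rpow_nonneg hu.1.le _) (Real.rpow_nonneg h1u.le _))
      (Real.exp_pos _).le
  rw [abs_of_nonneg hnn]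
  calc u ^ (κ - 1) * (1 - u) ^ (-(κ + 2)) * Real.exp (-κ / u)
      = (u ^ (κ - 1) * Real.exp (-κ / u)) * (1 - u) ^ (-(κ + 2)) := by ring
    _ ≤ (1 / κ) * (1 - v) ^ (-(κ + 2)) := by
        apply mul_le_mul (aux_b1 hκ hu.1 (by linarith [hu.2, hv.2]))
          (Real.rpow_le_rpow_of_nonpos h1v (by linarith [hu.2]) (by linarith))
          (Real.rpow_nonneg h1u.le _) (by positivity)

/-- for `κ > 0` the inner integrand is integrable on `(0,v)` for
every `v ∈ (0,1)`, and
`g(v) = ((1−v)/v)^κ e^{κ/v} ∫₀^v u^{κ−1}(1−u)^{−(κ+2)} e^{−κ/u} du`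
tends to `0` as `v → 0+`. -/
theorem stmt19 (κ : ℝ) (hκ : 0 < κ) :
    (∀ v ∈ Set.Ioo (0:ℝ) 1,
      IntervalIntegrable
        (fun u => u ^ (κ - 1) * (1 - u) ^ (-(κ + 2)) * Real.exp (-κ / u))
        MeasureTheory.volume 0 v) ∧
    Filter.Tendsto
      (fun v => ((1 - v) / v) ^ κ * Real.exp (κ / v) *
        ∫ u in (0:ℝ)..v, u ^ (κ - 1) * (1 - u) ^ (-(κ + 2)) * Real.exp (-κ / u))
      (nhdsWithin 0 (Set.Ioi 0)) (nhds 0) := by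
  refine ⟨fun v hv => aux_full_int hκ hv, ?_⟩
  set G : ℝ → ℝ := fun v => ((1 - v) / v) ^ κ * Real.exp (κ / v) *
        ∫ u in (0:ℝ)..v, u ^ (κ - 1) * (1 - u) ^ (-(κ + 2)) * Real.exp (-κ / u) with hG
  have hlow : ∀ v ∈ Set.Ioo (0:ℝ) 1, 0 ≤ G v := by
    intro v hv
    apply mul_nonneg
    · exact mul_nonneg (Real.rpow_nonneg (div_nonneg (by linarith [hv.2]) hv.1.le) κ)
        (Real.exp_pos _).le
    · apply intervalIntegral.integral_nonneg hv.1.le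
      intro u hu
      exact mul_nonneg (mul_nonneg (Real.rpow_nonneg hu.1 _)
        (Real.rpow_nonneg (by linarith [hu.2, hv.2]) _)) (Real.exp_pos _).le
  have hup : ∀ v ∈ Set.Ioo (0:ℝ) 1, G v ≤ v * (1 - v) ^ (-2:ℝ) / κ := by
    intro v hv
    have h1v : (0:ℝ) < 1 - v := by linarith [hv.2]
    have hPnn : (0:ℝ) ≤ ((1 - v) / v) ^ κ * Real.exp (κ / v) :=
      mul_nonneg (Real.rpow_nonneg (div_nonneg h1v.le hv.1.le) κ) (Real.exp_pos _).le
    have hintle : (∫ u in (0:ℝ)..v, u ^ (κ - 1) * (1 - u) ^ (-(κ + 2)) * Real.exp (-κ / u))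
        ≤ (1 - v) ^ (-(κ + 2)) * ((v / κ) * (v ^ κ * Real.exp (-κ / v))) := by
      rw [intervalIntegral.integral_of_le hv.1.le]
      have hi1 : IntegrableOn (fun u : ℝ => u ^ (κ - 1) * Real.exp (-κ / u)) (Set.Ioc 0 v) :=
        (intervalIntegrable_iff_integrableOn_Ioc_of_le hv.1.le).mp
          (aux_int1 hκ hv.1.le hv.2.le)
      have hif : IntegrableOn
          (fun u => u ^ (κ - 1) * (1 - u) ^ (-(κ + 2)) * Real.exp (-κ / u)) (Set.Ioc 0 v) :=
        (intervalIntegrable_iff_integrableOn_Ioc_of_le hv.1.le).mp (aux_full_int hκ hv)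
      calc (∫ u in Set.Ioc (0:ℝ) v, u ^ (κ - 1) * (1 - u) ^ (-(κ + 2)) * Real.exp (-κ / u))
          ≤ ∫ u in Set.Ioc (0:ℝ) v, (1 - v) ^ (-(κ + 2)) * (u ^ (κ - 1) * Real.exp (-κ / u)) := by
            apply MeasureTheory.setIntegral_mono_on hif
              (hi1.const_mul _) measurableSet_Ioc
            intro u hu
            have h1u : (0:ℝ) < 1 - u := by linarith [hu.2, hv.2]
            calc u ^ (κ - 1) * (1 - u) ^ (-(κ + 2)) * Real.exp (-κ / u)
                = (1 - u) ^ (-(κ + 2)) * (u ^ (κ - 1) * Real.exp (-κ / u)) := by ring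
              _ ≤ (1 - v) ^ (-(κ + 2)) * (u ^ (κ - 1) * Real.exp (-κ / u)) := by
                  apply mul_le_mul_of_nonneg_right
                    (Real.rpow_le_rpow_of_nonpos h1v (by linarith [hu.2]) (by linarith))
                    (mul_nonneg (Real.rpow_nonneg hu.1.le _) (Real.exp_pos _).le)
        _ = (1 - v) ^ (-(κ + 2)) * ∫ u in Set.Ioc (0:ℝ) v, u ^ (κ - 1) * Real.exp (-κ / u) :=
            MeasureTheory.integral_const_mul _ _
        _ ≤ (1 - v) ^ (-(κ + 2)) * ((v / κ) * (v ^ κ * Real.exp (-κ / v))) :=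
            mul_le_mul_of_nonneg_left (aux_cmp hκ hv.1 hv.2.le) (Real.rpow_nonneg h1v.le _)
    have key : ((1 - v) / v) ^ κ * Real.exp (κ / v) *
          ((1 - v) ^ (-(κ + 2)) * ((v / κ) * (v ^ κ * Real.exp (-κ / v))))
        = v * (1 - v) ^ (-2:ℝ) / κ := by
      have e1 : Real.exp (κ / v) * Real.exp (-κ / v) = 1 := by
        rw [← Real.exp_add, show κ / v + -κ / v = 0 by ring, Real.exp_zero]
      have e2 : (1 - v) ^ κ * (1 - v) ^ (-(κ + 2)) = (1 - v) ^ (-2:ℝ) := by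
        rw [← Real.rpow_add h1v]; norm_num
      have e3 : v ^ κ ≠ 0 := (Real.rpow_pos_of_pos hv.1 κ).ne'
      calc ((1 - v) / v) ^ κ * Real.exp (κ / v) *
            ((1 - v) ^ (-(κ + 2)) * ((v / κ) * (v ^ κ * Real.exp (-κ / v))))
          = ((1 - v) ^ κ * (1 - v) ^ (-(κ + 2))) * (v ^ κ / v ^ κ) *
              (Real.exp (κ / v) * Real.exp (-κ / v)) * (v / κ) := by
            rw [Real.div_rpow h1v.le hv.1.le]; ring
        _ = v * (1 - v) ^ (-2:ℝ) / κ := by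
            rw [e1, e2, div_self e3]; ring
    calc G v ≤ ((1 - v) / v) ^ κ * Real.exp (κ / v) *
          ((1 - v) ^ (-(κ + 2)) * ((v / κ) * (v ^ κ * Real.exp (-κ / v)))) :=
          mul_le_mul_of_nonneg_left hintle hPnn
      _ = v * (1 - v) ^ (-2:ℝ) / κ := key
  -- squeeze
  have hB : Tendsto (fun v : ℝ => v * (1 - v) ^ (-2:ℝ) / κ)
      (nhdsWithin 0 (Set.Ioi 0)) (nhds 0) := by
    have ci : ContinuousAt (fun v : ℝ => 1 - v) 0 := by fun_prop
    have co : ContinuousAt (fun x : ℝ => x ^ (-2:ℝ)) ((fun v : ℝ => 1 - v) 0) := by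
      have : ((fun v : ℝ => 1 - v) 0) = (1:ℝ) := by norm_num
      rw [this]
      exact Real.continuousAt_rpow_const 1 (-2) (Or.inl one_ne_zero)
    have c : ContinuousAt (fun v : ℝ => v * (1 - v) ^ (-2:ℝ) / κ) 0 :=
      (continuousAt_id.mul (co.comp ci)).div_const κ
    have := c.tendsto.mono_left (nhdsWithin_le_nhds (s := Set.Ioi 0))
    simpa using this
  apply tendsto_of_tendsto_of_tendsto_of_le_of_le' tendsto_const_nhds hB
  · filter_upwards [Ioo_mem_nhdsGT_of_mem ⟨le_refl (0:ℝ), zero_lt_one⟩] with v hv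
    exact hlow v hv
  · filter_upwards [Ioo_mem_nhdsGT_of_mem ⟨le_refl (0:ℝ), zero_lt_one⟩] with v hv
    exact hup v hv
end
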